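/- arXiv:1309.5262 — 4 statements merged into one kernel-verified Lean document; each statement's English description precedes it below -/
import Mathlib

section
/- Let 0 < a < b be real numbers and ε > 0. For every real number t with a ≤ t ≤ b, max( Q((t−a)/(aε)), Q((b−t)/(bε)) ) ≥ Q((b−a)/((a+b)ε)), with equality if and only if t = 2ab/(a+b). Hence t = 2ab/(a+b) is the optimal quantization threshold for distinguishing runlengths a and b. -/
/-- The standard Gaussian tail function `Q(x) = ∫_x^∞ (1/√(2π)) e^{−y²/2} dy`. -/
noncomputable def gaussQ (x : ℝ) : ℝ :=
  ∫ y in Set.Ioi x, (Real.sqrt (2 * Real.pi))⁻¹ * Real.exp (-(y ^ 2) / 2)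

lemma gaussDens_pos (y : ℝ) : 0 < (Real.sqrt (2 * Real.pi))⁻¹ * Real.exp (-(y ^ 2) / 2) := by
  apply mul_pos
  · exact inv_pos.mpr (Real.sqrt_pos.mpr (by positivity))
  · exact Real.exp_pos _

lemma gaussDens_integrable :
    MeasureTheory.Integrable
      (fun y : ℝ => (Real.sqrt (2 * Real.pi))⁻¹ * Real.exp (-(y ^ 2) / 2)) := by
  have h := (integrable_exp_neg_mul_sq (by norm_num : (0:ℝ) < 1/2)).const_mul
    (Real.sqrt (2 * Real.pi))⁻¹
  convert h using 2 with y
  ring_nf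

lemma gaussQ_strictAnti : StrictAnti gaussQ := by
  intro x y hxy
  have hint := gaussDens_integrable
  have hsplit : gaussQ x =
      (∫ z in Set.Ioc x y, (Real.sqrt (2 * Real.pi))⁻¹ * Real.exp (-(z ^ 2) / 2)) + gaussQ y := by
    unfold gaussQ
    rw [← MeasureTheory.setIntegral_union]
    · rw [Set.Ioc_union_Ioi_eq_Ioi hxy.le]
    · exact Set.Ioc_disjoint_Ioi le_rfl
    · exact measurableSet_Ioi
    · exact hint.integrableOn
    · exact hint.integrableOn
  have hpos : 0 < ∫ z in Set.Ioc x y,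
      (Real.sqrt (2 * Real.pi))⁻¹ * Real.exp (-(z ^ 2) / 2) := by
    rw [← intervalIntegral.integral_of_le hxy.le]
    apply intervalIntegral.intervalIntegral_pos_of_pos
    · exact hint.intervalIntegrable
    · exact fun z => gaussDens_pos z
    · exact hxy
  linarith [hsplit]

/-- For `0 < a < b`, `ε > 0` and any threshold `t ∈ [a,b]`, the worst-case decision error
`max(Q((t−a)/(aε)), Q((b−t)/(bε)))` is at least `Q((b−a)/((a+b)ε))`, with equality iff
`t = 2ab/(a+b)`; i.e. `t = 2ab/(a+b)` is the optimal quantization threshold. -/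
theorem stmt1 (a b ε : ℝ) (ha : 0 < a) (hab : a < b) (hε : 0 < ε)
    (t : ℝ) (ht1 : a ≤ t) (ht2 : t ≤ b) :
    gaussQ ((b - a) / ((a + b) * ε)) ≤
      max (gaussQ ((t - a) / (a * ε))) (gaussQ ((b - t) / (b * ε))) ∧
    (max (gaussQ ((t - a) / (a * ε))) (gaussQ ((b - t) / (b * ε)))
        = gaussQ ((b - a) / ((a + b) * ε)) ↔ t = 2 * a * b / (a + b)) := by
  have hb : 0 < b := ha.trans hab
  have hab' : 0 < a + b := by linarith
  have hQ := gaussQ_strictAnti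
  set c := (b - a) / ((a + b) * ε) with hc
  set t' := 2 * a * b / (a + b) with ht'
  have hleg1 : (t' - a) / (a * ε) = c := by
    rw [ht', hc]; field_simp; ring
  have hleg2 : (b - t') / (b * ε) = c := by
    rw [ht', hc]; field_simp; ring
  have hbε : (0:ℝ) < b * ε := by positivity
  have haε : (0:ℝ) < a * ε := by positivity
  have case_gt : ∀ s : ℝ, t' < s → gaussQ c < gaussQ ((b - s) / (b * ε)) := by
    intro s hs
    apply hQ
    rw [← hleg2]
    gcongr
  have case_lt : ∀ s : ℝ, s < t' → gaussQ c < gaussQ ((s - a) / (a * ε)) := by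
    intro s hs
    apply hQ
    rw [← hleg1]
    gcongr
  have hmain : gaussQ c ≤ max (gaussQ ((t - a) / (a * ε))) (gaussQ ((b - t) / (b * ε))) := by
    rcases lt_trichotomy t t' with h | h | h
    · exact le_max_of_le_left (case_lt t h).le
    · subst h
      rw [hleg1, hleg2, max_self]
    · exact le_max_of_le_right (case_gt t h).le
  refine ⟨hmain, ?_, ?_⟩
  · intro heq
    by_contra hne
    rcases lt_or_gt_of_ne hne with h | h
    · have h1 := case_lt t h
      have : gaussQ c < max (gaussQ ((t - a) / (a * ε))) (gaussQ ((b - t) / (b * ε))) :=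
        lt_max_of_lt_left h1
      linarith [heq ▸ this]
    · have h1 := case_gt t h
      have : gaussQ c < max (gaussQ ((t - a) / (a * ε))) (gaussQ ((b - t) / (b * ε))) :=
        lt_max_of_lt_right h1
      linarith [heq ▸ this]
  · intro h
    subst h
    rw [hleg1, hleg2, max_self]
end

section
/- For n ≥ 1 let N(n) be the number of binary strings of length n in which every maximal run of 0s has length 1 and every maximal run of 1s has length 1 or 2. Then (log₂ N(n))/n converges as n → ∞ to log₂ ρ, where ρ is the unique real root of x³ = x + 1 (ρ ≈ 1.3247, so the limit ≈ 0.406). This limit is the capacity of the RLL({1},{1,2}) constraint. -/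
/-- Positions `i ≤ j` form a maximal run of the binary string `s` of length `n`:
`s` is constant on `[i,j]`, either `i` is the first position or the preceding symbol differs,
and either `j` is the last position or the following symbol differs. -/

def IsMaxRun {n : ℕ} (s : Fin n → Bool) (i j : Fin n) : Prop :=
  i ≤ j ∧ (∀ k : Fin n, i ≤ k → k ≤ j → s k = s i) ∧
    ((i : ℕ) = 0 ∨ ∃ i' : Fin n, (i' : ℕ) + 1 = (i : ℕ) ∧ s i' ≠ s i) ∧
    ((j : ℕ) = n - 1 ∨ ∃ j' : Fin n, (j : ℕ) + 1 = (j' : ℕ) ∧ s j' ≠ s j)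

def RLL {n : ℕ} (s : Fin n → Bool) : Prop :=
  ∀ i j : Fin n, IsMaxRun s i j →
      ((s i = false → (j : ℕ) - (i : ℕ) + 1 = 1) ∧
       (s i = true → ((j : ℕ) - (i : ℕ) + 1 = 1 ∨ (j : ℕ) - (i : ℕ) + 1 = 2)))


/-- The number of binary strings of length `n` in which every maximal run of `0`s has
length `1` and every maximal run of `1`s has length `1` or `2`, i.e. the strings
satisfying the RLL({1},{1,2}) constraint. -/
noncomputable def N₀₁₂ (n : ℕ) : ℕ :=
  Nat.card {s : Fin n → Bool //
    ∀ i j : Fin n, IsMaxRun s i j →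
      ((s i = false → (j : ℕ) - (i : ℕ) + 1 = 1) ∧
       (s i = true → ((j : ℕ) - (i : ℕ) + 1 = 1 ∨ (j : ℕ) - (i : ℕ) + 1 = 2)))}

def Loc {n : ℕ} (s : Fin n → Bool) : Prop :=
  (∀ i : ℕ, ∀ h : i + 1 < n, ¬(s ⟨i, by omega⟩ = false ∧ s ⟨i+1, h⟩ = false)) ∧
  (∀ i : ℕ, ∀ h : i + 2 < n,
    ¬(s ⟨i, by omega⟩ = true ∧ s ⟨i+1, by omega⟩ = true ∧ s ⟨i+2, h⟩ = true))

lemma exists_maxRun {n : ℕ} (s : Fin n → Bool) (k : Fin n) :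
    ∃ i j : Fin n, IsMaxRun s i j ∧ i ≤ k ∧ k ≤ j ∧
      ∀ t : Fin n, i ≤ t → t ≤ j → s t = s k := by
  classical
  set P : ℕ → Prop := fun m =>
    m ≤ (k : ℕ) ∧ ∀ t, ∀ ht : t < n, m ≤ t → t ≤ (k : ℕ) → s ⟨t, ht⟩ = s k with hP
  have hPk : P (k : ℕ) := by
    refine ⟨le_rfl, fun t ht h1 h2 => ?_⟩
    have : (⟨t, ht⟩ : Fin n) = k := Fin.ext (show t = (k:ℕ) by omega)
    rw [this]
  have hex : ∃ m, P m := ⟨(k : ℕ), hPk⟩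
  set i0 := Nat.find hex with hi0
  have hPi : P i0 := Nat.find_spec hex
  have hi0k : i0 ≤ (k : ℕ) := hPi.1
  set Q : ℕ → Prop := fun m =>
    (k : ℕ) ≤ m ∧ ∃ hm : m < n, ∀ t, ∀ ht : t < n, (k : ℕ) ≤ t → t ≤ m → s ⟨t, ht⟩ = s k
    with hQdef
  have hQk : Q (k : ℕ) := by
    refine ⟨le_rfl, k.isLt, fun t ht h1 h2 => ?_⟩
    have : (⟨t, ht⟩ : Fin n) = k := Fin.ext (show t = (k:ℕ) by omega)
    rw [this]
  have hkn : (k : ℕ) ≤ n - 1 := by have := k.isLt; omega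
  set j0 := Nat.findGreatest Q (n - 1) with hj0
  have hQj : Q j0 := Nat.findGreatest_spec hkn hQk
  have hkj0 : (k : ℕ) ≤ j0 := hQj.1
  have hj0n : j0 < n := hQj.2.1
  have hj0le : j0 ≤ n - 1 := Nat.findGreatest_le _
  refine ⟨⟨i0, by omega⟩, ⟨j0, hj0n⟩, ?_, by simpa [Fin.le_def] using hi0k,
    by simpa [Fin.le_def] using hkj0, ?_⟩
  · -- IsMaxRun
    have cst : ∀ t : Fin n, i0 ≤ (t : ℕ) → (t : ℕ) ≤ j0 → s t = s k := by
      intro t h1 h2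
      rcases le_or_gt (t : ℕ) (k : ℕ) with h | h
      · have := hPi.2 (t : ℕ) t.isLt h1 h
        simpa using this
      · have := hQj.2.2 (t : ℕ) t.isLt h.le h2
        simpa using this
    have sIk : s ⟨i0, by omega⟩ = s k := cst _ le_rfl (by simpa using le_trans hi0k hkj0)
    have sJk : s ⟨j0, hj0n⟩ = s k := cst _ (by simpa using le_trans hi0k hkj0) le_rfl
    refine ⟨by simpa [Fin.le_def] using le_trans hi0k hkj0, ?_, ?_, ?_⟩
    · intro t h1 h2
      rw [sIk]
      exact cst t (by simpa [Fin.le_def] using h1) (by simpa [Fin.le_def] using h2)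
    · rcases Nat.eq_zero_or_pos i0 with h0 | h0
      · exact Or.inl h0
      · refine Or.inr ⟨⟨i0 - 1, by omega⟩, by simp; omega, ?_⟩
        rw [sIk]
        intro hcon
        have : P (i0 - 1) := by
          refine ⟨by omega, fun t ht h1 h2 => ?_⟩
          rcases eq_or_lt_of_le h1 with h | h
          · have : (⟨t, ht⟩ : Fin n) = ⟨i0 - 1, by omega⟩ := Fin.ext (show t = i0 - 1 by omega)
            rw [this, hcon]
          · exact hPi.2 t ht (by omega) h2
        exact Nat.find_min hex (by omega) this
    · rcases eq_or_lt_of_le hj0le with h0 | h0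
      · exact Or.inl h0
      · refine Or.inr ⟨⟨j0 + 1, by omega⟩, by simp, ?_⟩
        rw [sJk]
        intro hcon
        have : Q (j0 + 1) := by
          refine ⟨by omega, by omega, fun t ht h1 h2 => ?_⟩
          rcases eq_or_lt_of_le h2 with h | h
          · have : (⟨t, ht⟩ : Fin n) = ⟨j0 + 1, by omega⟩ := Fin.ext (show t = j0 + 1 by omega)
            rw [this]
            simpa using hcon
          · exact hQj.2.2 t ht h1 (by omega)
        exact Nat.findGreatest_is_greatest (n := n - 1) (by omega) (by omega) this
  · intro t h1 h2
    rcases le_or_gt (t : ℕ) (k : ℕ) with h | h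
    · have := hPi.2 (t : ℕ) t.isLt (by simpa [Fin.le_def] using h1) h
      simpa using this
    · have := hQj.2.2 (t : ℕ) t.isLt h.le (by simpa [Fin.le_def] using h2)
      simpa using this

lemma rll_iff_loc {n : ℕ} (s : Fin n → Bool) : RLL s ↔ Loc s := by
  constructor
  · intro hr
    constructor
    · rintro i h ⟨h0, h1⟩
      obtain ⟨I, J, hm, hIk, hkJ, cst⟩ := exists_maxRun s ⟨i, by omega⟩
      have hJ : i + 1 ≤ (J : ℕ) := by
        by_contra hc
        have hJi : (J : ℕ) = i := by
          have := (Fin.le_def).mp hkJ; simp at this; omega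
        rcases hm.2.2.2 with h' | ⟨j', hj1, hj2⟩
        · omega
        · have : j' = (⟨i + 1, h⟩ : Fin n) := Fin.ext (show (j':ℕ) = i + 1 by omega)
          rw [this] at hj2
          apply hj2
          rw [h1, cst J hm.1 le_rfl, h0]
      have hsI : s I = false := by rw [cst I le_rfl hm.1]; exact h0
      have := (hr I J hm).1 hsI
      have hIi : (I : ℕ) ≤ i := (Fin.le_def).mp hIk
      omega
    · rintro i h ⟨h0, h1, h2⟩
      obtain ⟨I, J, hm, hIk, hkJ, cst⟩ := exists_maxRun s ⟨i + 1, by omega⟩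
      have hsk : s (⟨i + 1, by omega⟩ : Fin n) = true := h1
      have hI : (I : ℕ) ≤ i := by
        by_contra hc
        have hIi : (I : ℕ) = i + 1 := by
          have := (Fin.le_def).mp hIk; simp at this; omega
        rcases hm.2.2.1 with h' | ⟨i', hi1, hi2⟩
        · omega
        · have : i' = (⟨i, by omega⟩ : Fin n) := Fin.ext (show (i':ℕ) = i by omega)
          rw [this] at hi2
          apply hi2
          rw [cst I le_rfl hm.1, h0, hsk]
      have hJ : i + 2 ≤ (J : ℕ) := by
        by_contra hc
        have hJi : (J : ℕ) = i + 1 := by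
          have := (Fin.le_def).mp hkJ; simp at this; omega
        rcases hm.2.2.2 with h' | ⟨j', hj1, hj2⟩
        · omega
        · have : j' = (⟨i + 2, h⟩ : Fin n) := Fin.ext (show (j':ℕ) = i + 2 by omega)
          rw [this] at hj2
          apply hj2
          rw [h2, cst J hm.1 le_rfl, hsk]
      have hsI : s I = true := by rw [cst I le_rfl hm.1]; exact hsk
      have := (hr I J hm).2 hsI
      omega
  · intro hl i j hm
    have cst := hm.2.1
    have hij : (i : ℕ) ≤ (j : ℕ) := (Fin.le_def).mp hm.1
    constructor
    · intro hf
      by_contra hne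
      have h1 : i + 1 < n := by have := j.isLt; omega
      have : s ⟨(i : ℕ) + 1, h1⟩ = s i := by
        apply cst <;> simp [Fin.le_def] <;> omega
      exact hl.1 i h1 ⟨by simpa using hf, by rw [this]; exact hf⟩
    · intro ht
      by_contra hne
      push_neg at hne
      have h2 : i + 2 < n := by have := j.isLt; omega
      have e1 : s ⟨(i : ℕ) + 1, by omega⟩ = s i := by
        apply cst <;> simp [Fin.le_def] <;> omega
      have e2 : s ⟨(i : ℕ) + 2, h2⟩ = s i := by
        apply cst <;> simp [Fin.le_def] <;> omega
      exact hl.2 i h2 ⟨by simpa using ht, by rw [e1]; exact ht, by rw [e2]; exact ht⟩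


noncomputable def v (m : ℕ) (p : Bool × Bool) : ℕ :=
  Nat.card {s : Fin (m+2) → Bool //
    Loc s ∧ s ⟨m, by omega⟩ = p.1 ∧ s ⟨m+1, by omega⟩ = p.2}

lemma card_split {α : Type*} [Finite α] (P : α → Prop) (f : α → Bool) :
    Nat.card {a // P a} =
      Nat.card {a // P a ∧ f a = true} + Nat.card {a // P a ∧ f a = false} := by
  classical
  rw [← Nat.card_sum]
  apply Nat.card_congr
  refine ((Equiv.sumCongr (Equiv.subtypeSubtypeEquivSubtypeInter P (fun a => f a = true)).symm
      ((Equiv.subtypeEquivRight (fun a => ?_)).trans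
        (Equiv.subtypeSubtypeEquivSubtypeInter P (fun a => ¬ f a = true)).symm)).trans
    (Equiv.sumCompl fun x : {a // P a} => f x.1 = true)).symm
  simp

def equivSnoc {m : ℕ} (R : (Fin (m+1) → Bool) → Prop) (c : Bool)
    (h : ∀ s, R s → s (Fin.last m) = c) :
    {s : Fin (m+1) → Bool // R s} ≃ {t : Fin m → Bool // R (Fin.snoc t c)} where
  toFun s := ⟨Fin.init s.1, by
    have := h s.1 s.2
    rw [← this, Fin.snoc_init_self]
    exact s.2⟩
  invFun t := ⟨Fin.snoc t.1 c, t.2⟩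
  left_inv s := Subtype.ext (by
    have := h s.1 s.2
    dsimp only
    rw [← this, Fin.snoc_init_self])
  right_inv t := Subtype.ext (by
    dsimp only
    rw [Fin.init_snoc])

lemma snoc_mk_lt {m : ℕ} (t : Fin m → Bool) (c : Bool) (i : ℕ) (h : i < m) (h' : i < m + 1) :
    (Fin.snoc t c : Fin (m+1) → Bool) ⟨i, h'⟩ = t ⟨i, h⟩ := by
  have : (⟨i, h'⟩ : Fin (m+1)) = Fin.castSucc ⟨i, h⟩ := rfl
  rw [this, Fin.snoc_castSucc]

lemma snoc_mk_last {m : ℕ} (t : Fin m → Bool) (c : Bool) (h' : m < m + 1) :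
    (Fin.snoc t c : Fin (m+1) → Bool) ⟨m, h'⟩ = c := by
  have : (⟨m, h'⟩ : Fin (m+1)) = Fin.last m := rfl
  rw [this, Fin.snoc_last]

lemma loc_snoc {m : ℕ} (t : Fin (m+2) → Bool) (c : Bool) :
    Loc (Fin.snoc t c : Fin (m+3) → Bool) ↔
      Loc t ∧ ¬(t ⟨m+1, by omega⟩ = false ∧ c = false) ∧
        ¬(t ⟨m, by omega⟩ = true ∧ t ⟨m+1, by omega⟩ = true ∧ c = true) := by
  constructor
  · intro hl
    refine ⟨⟨?_, ?_⟩, ?_, ?_⟩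
    · intro i h
      have := hl.1 i (by omega)
      rwa [snoc_mk_lt t c i (by omega), snoc_mk_lt t c (i+1) h] at this
    · intro i h
      have := hl.2 i (by omega)
      rwa [snoc_mk_lt t c i (by omega), snoc_mk_lt t c (i+1) (by omega),
        snoc_mk_lt t c (i+2) h] at this
    · have := hl.1 (m+1) (by omega)
      rwa [snoc_mk_lt t c (m+1) (by omega), snoc_mk_last] at this
    · have := hl.2 m (by omega)
      rwa [snoc_mk_lt t c m (by omega), snoc_mk_lt t c (m+1) (by omega),
        snoc_mk_last] at this
  · rintro ⟨hl, h1, h2⟩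
    constructor
    · intro i h
      rcases Nat.lt_or_ge (i+1) (m+2) with h' | h'
      · rw [snoc_mk_lt t c i (by omega), snoc_mk_lt t c (i+1) h']
        exact hl.1 i h'
      · have hi : i = m + 1 := by omega
        subst hi
        rw [snoc_mk_lt t c (m+1) (by omega), snoc_mk_last]
        exact h1
    · intro i h
      rcases Nat.lt_or_ge (i+2) (m+2) with h' | h'
      · rw [snoc_mk_lt t c i (by omega), snoc_mk_lt t c (i+1) (by omega),
          snoc_mk_lt t c (i+2) h']
        exact hl.2 i h'
      · have hi : i = m := by omega
        subst hi
        rw [snoc_mk_lt t c i (by omega), snoc_mk_lt t c (i+1) (by omega), snoc_mk_last]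
        exact h2

lemma v_FF (m : ℕ) : v m (false, false) = 0 := by
  rw [v, Nat.card_eq_zero]
  left
  constructor
  rintro ⟨s, hl, h1, h2⟩
  exact hl.1 m (by omega) ⟨h1, h2⟩

lemma v0_ne (a b : Bool) (hab : ¬(a = false ∧ b = false)) : v 0 (a, b) = 1 := by
  rw [v, Nat.card_eq_one_iff_unique]
  constructor
  · constructor
    rintro ⟨s, _, hs1, hs2⟩ ⟨t, _, ht1, ht2⟩
    refine Subtype.ext (funext fun i => ?_)
    match i with
    | ⟨0, _⟩ => exact hs1.trans ht1.symm
    | ⟨1, _⟩ => exact hs2.trans ht2.symm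
  · refine ⟨fun i => if (i : ℕ) = 0 then a else b, ⟨?_, ?_⟩, by simp, by simp⟩
    · intro i h
      have : i = 0 := by omega
      subst this
      simpa using hab
    · intro i h
      omega

lemma v_rec_TF (n : ℕ) : v (n+1) (true, false) = v n (false, true) + v n (true, true) := by
  have hn : n < n + 2 := by omega
  have hn1 : n + 1 < n + 2 := by omega
  have h1 : v (n+1) (true, false) =
      Nat.card {t : Fin (n+2) → Bool // Loc t ∧ t ⟨n+1, hn1⟩ = true} := by
    rw [v]
    refine Nat.card_congr (((equivSnoc _ false (fun s hs => hs.2.2)).trans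
      (Equiv.subtypeEquivRight fun t => ?_)))
    rw [loc_snoc]
    constructor
    · rintro ⟨⟨hl, _, _⟩, h1, _⟩
      rw [snoc_mk_lt t false (n+1) (by omega)] at h1
      exact ⟨hl, h1⟩
    · rintro ⟨hl, h1⟩
      refine ⟨⟨hl, by simp [h1], by simp⟩, ?_, ?_⟩
      · rw [snoc_mk_lt t false (n+1) (by omega)]; exact h1
      · rw [snoc_mk_last]
  rw [card_split (fun t : Fin (n+2) → Bool => Loc t ∧ t ⟨n+1, hn1⟩ = true)
    (fun t : Fin (n+2) → Bool => t ⟨n, hn⟩)] at h1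
  rw [h1]
  have e1 : Nat.card {t : Fin (n+2) → Bool //
      (Loc t ∧ t ⟨n+1, hn1⟩ = true) ∧ t ⟨n, hn⟩ = true} = v n (true, true) := by
    rw [v]
    exact Nat.card_congr (Equiv.subtypeEquivRight fun t => by dsimp only; tauto)
  have e2 : Nat.card {t : Fin (n+2) → Bool //
      (Loc t ∧ t ⟨n+1, hn1⟩ = true) ∧ t ⟨n, hn⟩ = false} = v n (false, true) := by
    rw [v]
    exact Nat.card_congr (Equiv.subtypeEquivRight fun t => by dsimp only; tauto)
  rw [e1, e2, Nat.add_comm]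

lemma v_rec_FT (n : ℕ) : v (n+1) (false, true) = v n (true, false) := by
  have hn : n < n + 2 := by omega
  have hn1 : n + 1 < n + 2 := by omega
  have h1 : v (n+1) (false, true) =
      Nat.card {t : Fin (n+2) → Bool // Loc t ∧ t ⟨n+1, hn1⟩ = false} := by
    rw [v]
    refine Nat.card_congr (((equivSnoc _ true (fun s hs => hs.2.2)).trans
      (Equiv.subtypeEquivRight fun t => ?_)))
    rw [loc_snoc]
    constructor
    · rintro ⟨⟨hl, _, _⟩, h1, _⟩
      rw [snoc_mk_lt t true (n+1) (by omega)] at h1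
      exact ⟨hl, h1⟩
    · rintro ⟨hl, h1⟩
      refine ⟨⟨hl, by simp, by simp [h1]⟩, ?_, ?_⟩
      · rw [snoc_mk_lt t true (n+1) (by omega)]; exact h1
      · rw [snoc_mk_last]
  rw [card_split (fun t : Fin (n+2) → Bool => Loc t ∧ t ⟨n+1, hn1⟩ = false)
    (fun t : Fin (n+2) → Bool => t ⟨n, hn⟩)] at h1
  rw [h1]
  have h2 : Nat.card {t : Fin (n+2) → Bool //
      (Loc t ∧ t ⟨n+1, hn1⟩ = false) ∧ t ⟨n, hn⟩ = false} = 0 := by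
    rw [Nat.card_eq_zero]
    left
    constructor
    rintro ⟨t, ⟨hl, h1⟩, h2⟩
    exact hl.1 n hn1 ⟨h2, h1⟩
  rw [h2, Nat.add_zero, v]
  exact Nat.card_congr (Equiv.subtypeEquivRight fun t => by dsimp only; tauto)

lemma v_rec_TT (n : ℕ) : v (n+1) (true, true) = v n (false, true) := by
  rw [v, v]
  refine Nat.card_congr (((equivSnoc _ true (fun s hs => hs.2.2)).trans
    (Equiv.subtypeEquivRight fun t => ?_)))
  rw [loc_snoc]
  rw [snoc_mk_lt t true (n+1) (by omega), snoc_mk_last]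
  constructor
  · rintro ⟨⟨hl, _, h2⟩, h1, _⟩
    simp only [h1, true_and] at h2
    refine ⟨hl, by simpa using h2, h1⟩
  · rintro ⟨hl, h0, h1⟩
    exact ⟨⟨hl, by simp [h1], by simp [h0]⟩, h1, rfl⟩

noncomputable def Stot (n : ℕ) : ℕ := v n (true, false) + v n (false, true) + v n (true, true)

lemma S0 : Stot 0 = 3 := by
  rw [Stot, v0_ne true false (by simp), v0_ne false true (by simp), v0_ne true true (by simp)]

lemma v1TF : v 1 (true, false) = 2 := by
  have h := v_rec_TF 0
  rw [show (0:ℕ) + 1 = 1 by norm_num] at h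
  rw [h, v0_ne false true (by simp), v0_ne true true (by simp)]

lemma v1FT : v 1 (false, true) = 1 := by
  have h := v_rec_FT 0
  rw [show (0:ℕ) + 1 = 1 by norm_num] at h
  rw [h, v0_ne true false (by simp)]

lemma v1TT : v 1 (true, true) = 1 := by
  have h := v_rec_TT 0
  rw [show (0:ℕ) + 1 = 1 by norm_num] at h
  rw [h, v0_ne false true (by simp)]

lemma S1 : Stot 1 = 4 := by rw [Stot, v1TF, v1FT, v1TT]

lemma S2 : Stot 2 = 5 := by
  have h0 := v_rec_TF 1; have h1 := v_rec_FT 1; have h2 := v_rec_TT 1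
  rw [show (1:ℕ) + 1 = 2 by norm_num] at h0 h1 h2
  rw [Stot, h0, h1, h2, v1TF, v1FT, v1TT]

lemma S_rec (n : ℕ) : Stot (n+3) = Stot (n+1) + Stot n := by
  have a0 := v_rec_TF n; have a1 := v_rec_FT n; have a2 := v_rec_TT n
  have b0 := v_rec_TF (n+1); have b1 := v_rec_FT (n+1); have b2 := v_rec_TT (n+1)
  have c0 := v_rec_TF (n+2); have c1 := v_rec_FT (n+2); have c2 := v_rec_TT (n+2)
  rw [show n+1+1 = n+2 by omega] at b0 b1 b2
  rw [show n+2+1 = n+3 by omega] at c0 c1 c2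
  simp only [Stot]
  omega


lemma N_S (n : ℕ) : N₀₁₂ (n+2) = Stot n := by
  have hn : n < n + 2 := by omega
  have hn1 : n + 1 < n + 2 := by omega
  have h0 : N₀₁₂ (n+2) = Nat.card {s : Fin (n+2) → Bool // Loc s} :=
    Nat.card_congr (Equiv.subtypeEquivRight fun s => rll_iff_loc s)
  rw [card_split (fun s : Fin (n+2) → Bool => Loc s)
    (fun s : Fin (n+2) → Bool => s ⟨n+1, hn1⟩)] at h0
  rw [card_split (fun s : Fin (n+2) → Bool => Loc s ∧ s ⟨n+1, hn1⟩ = true)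
    (fun s : Fin (n+2) → Bool => s ⟨n, hn⟩)] at h0
  rw [card_split (fun s : Fin (n+2) → Bool => Loc s ∧ s ⟨n+1, hn1⟩ = false)
    (fun s : Fin (n+2) → Bool => s ⟨n, hn⟩)] at h0
  have eTT : Nat.card {s : Fin (n+2) → Bool //
      (Loc s ∧ s ⟨n+1, hn1⟩ = true) ∧ s ⟨n, hn⟩ = true} = v n (true, true) := by
    rw [v]
    exact Nat.card_congr (Equiv.subtypeEquivRight fun t => by dsimp only; tauto)
  have eFT : Nat.card {s : Fin (n+2) → Bool //
      (Loc s ∧ s ⟨n+1, hn1⟩ = true) ∧ s ⟨n, hn⟩ = false} = v n (false, true) := by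
    rw [v]
    exact Nat.card_congr (Equiv.subtypeEquivRight fun t => by dsimp only; tauto)
  have eTF : Nat.card {s : Fin (n+2) → Bool //
      (Loc s ∧ s ⟨n+1, hn1⟩ = false) ∧ s ⟨n, hn⟩ = true} = v n (true, false) := by
    rw [v]
    exact Nat.card_congr (Equiv.subtypeEquivRight fun t => by dsimp only; tauto)
  have eFF : Nat.card {s : Fin (n+2) → Bool //
      (Loc s ∧ s ⟨n+1, hn1⟩ = false) ∧ s ⟨n, hn⟩ = false} = 0 := by
    rw [Nat.card_eq_zero]
    left
    constructor
    rintro ⟨s, ⟨hl, h1⟩, h2⟩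
    exact hl.1 n hn1 ⟨h2, h1⟩
  rw [eTT, eFT, eTF, eFF] at h0
  show N₀₁₂ (n+2) = v n (true, false) + v n (false, true) + v n (true, true)
  exact h0.trans (by ring)


lemma root_gt (ρ : ℝ) (hρ : ρ ^ 3 = ρ + 1) : 13/10 < ρ := by
  nlinarith [sq_nonneg ρ, sq_nonneg (ρ - 1), sq_nonneg (ρ + 1), sq_nonneg (ρ - 13/10),
    sq_nonneg (ρ + 13/10), sq_nonneg (ρ^2 - 1)]

lemma root_lt (ρ : ℝ) (hρ : ρ ^ 3 = ρ + 1) : ρ < 7/5 := by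
  nlinarith [sq_nonneg ρ, sq_nonneg (ρ - 1), sq_nonneg (ρ + 1), sq_nonneg (ρ - 7/5),
    sq_nonneg (ρ + 7/5), sq_nonneg (ρ^2 - 1)]

lemma root_unique : ∃! ρ : ℝ, ρ ^ 3 = ρ + 1 := by
  obtain ⟨x, hx, hfx⟩ : ∃ x ∈ Set.Icc (1:ℝ) 2, x ^ 3 - x = 1 := by
    have hc : ContinuousOn (fun x : ℝ => x ^ 3 - x) (Set.Icc 1 2) := by fun_prop
    have := intermediate_value_Icc (by norm_num : (1:ℝ) ≤ 2) hc
    have h1 : (1:ℝ) ∈ Set.Icc ((1:ℝ)^3 - 1) ((2:ℝ)^3 - 2) := by norm_num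
    obtain ⟨x, hx, hfx⟩ := this h1
    exact ⟨x, hx, hfx⟩
  have hx3 : x ^ 3 = x + 1 := by linarith
  refine ⟨x, hx3, fun y hy => ?_⟩
  have hxg := root_gt x hx3
  have hyg := root_gt y hy
  have key : (y - x) * (y^2 + y*x + x^2 - 1) = 0 := by nlinarith [hy, hx3]
  have hpos : y^2 + y*x + x^2 - 1 > 0 := by nlinarith
  rcases mul_eq_zero.mp key with h | h
  · linarith
  · linarith

lemma S_bounds (ρ : ℝ) (hρ : ρ ^ 3 = ρ + 1) :
    ∀ n : ℕ, ρ ^ (n+2) ≤ (Stot n : ℝ) ∧ (Stot n : ℝ) ≤ 2 * ρ ^ (n+2) := by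
  have h13 := root_gt ρ hρ
  have h14 := root_lt ρ hρ
  have hρ0 : (0:ℝ) < ρ := by linarith
  have key : ∀ n : ℕ, ρ ^ (n+5) = ρ ^ (n+3) + ρ ^ (n+2) := by
    intro n
    have : ρ ^ (n+5) = ρ ^ (n+2) * ρ ^ 3 := by ring
    rw [this, hρ]
    ring
  have main : ∀ n : ℕ,
      (ρ ^ (n+2) ≤ (Stot n : ℝ) ∧ (Stot n : ℝ) ≤ 2 * ρ ^ (n+2)) ∧
      (ρ ^ (n+3) ≤ (Stot (n+1) : ℝ) ∧ (Stot (n+1) : ℝ) ≤ 2 * ρ ^ (n+3)) ∧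
      (ρ ^ (n+4) ≤ (Stot (n+2) : ℝ) ∧ (Stot (n+2) : ℝ) ≤ 2 * ρ ^ (n+4)) := by
    intro n
    induction n with
    | zero =>
      rw [S0]
      rw [show (0:ℕ)+1 = 1 by norm_num, show (0:ℕ)+2 = 2 by norm_num, S1, S2]
      norm_num
      refine ⟨⟨by nlinarith, by nlinarith⟩, ⟨by nlinarith, by nlinarith⟩,
        by nlinarith, by nlinarith⟩
    | succ m ih =>
      obtain ⟨h0, h1, h2⟩ := ih
      refine ⟨by rw [show m+1+2 = m+3 by omega]; exact h1,
              by rw [show m+1+3 = m+4 by omega, show m+1+1 = m+2 by omega]; exact h2, ?_⟩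
      rw [show m+1+2 = m+3 by omega, show m+1+4 = m+5 by omega]
      rw [S_rec m, key m]
      push_cast
      constructor
      · exact add_le_add h1.1 h0.1
      · calc ((Stot (m+1) : ℝ) + (Stot m : ℝ)) ≤ 2 * ρ^(m+3) + 2 * ρ^(m+2) :=
              add_le_add h1.2 h0.2
          _ = 2 * (ρ^(m+3) + ρ^(m+2)) := by ring
  exact fun n => (main n).1

lemma N_limit (ρ : ℝ) (hρ : ρ ^ 3 = ρ + 1) :
    Filter.Tendsto (fun n : ℕ => Real.logb 2 (N₀₁₂ n) / n) Filter.atTop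
      (nhds (Real.logb 2 ρ)) := by
  have h13 := root_gt ρ hρ
  have hρ1 : (1:ℝ) < ρ := by linarith
  have hρ0 : (0:ℝ) < ρ := by linarith
  have hbd : ∀ n : ℕ, 2 ≤ n → ρ ^ n ≤ (N₀₁₂ n : ℝ) ∧ (N₀₁₂ n : ℝ) ≤ 2 * ρ ^ n := by
    intro n hn
    obtain ⟨m, rfl⟩ : ∃ m, n = m + 2 := ⟨n - 2, by omega⟩
    rw [N_S m]
    exact S_bounds ρ hρ m
  have hN0 : ∀ n : ℕ, 2 ≤ n → (0:ℝ) < (N₀₁₂ n : ℝ) := fun n hn =>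
    lt_of_lt_of_le (pow_pos hρ0 n) (hbd n hn).1
  apply tendsto_of_tendsto_of_tendsto_of_le_of_le'
    (g := fun _ : ℕ => Real.logb 2 ρ) tendsto_const_nhds
  · -- upper function tends to logb 2 ρ
    have : Filter.Tendsto (fun n : ℕ => Real.logb 2 ρ + 1 / n) Filter.atTop
        (nhds (Real.logb 2 ρ + 0)) :=
      Filter.Tendsto.add tendsto_const_nhds tendsto_one_div_atTop_nhds_zero_nat
    simpa using this
  · -- eventual lower bound
    filter_upwards [Filter.eventually_ge_atTop 2] with n hn
    have hn0 : (0:ℝ) < n := by exact_mod_cast (by omega : 0 < n)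
    rw [le_div_iff₀ hn0]
    calc Real.logb 2 ρ * n = Real.logb 2 (ρ ^ n) := by rw [Real.logb_pow]; ring
      _ ≤ Real.logb 2 (N₀₁₂ n) :=
        (Real.logb_le_logb (by norm_num) (pow_pos hρ0 n) (hN0 n hn)).mpr (hbd n hn).1
  · -- eventual upper bound
    filter_upwards [Filter.eventually_ge_atTop 2] with n hn
    have hn0 : (0:ℝ) < n := by exact_mod_cast (by omega : 0 < n)
    rw [div_le_iff₀ hn0]
    have h1 : Real.logb 2 (N₀₁₂ n) ≤ Real.logb 2 (2 * ρ ^ n) :=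
      (Real.logb_le_logb (by norm_num) (hN0 n hn) (by positivity)).mpr (hbd n hn).2
    have h2 : Real.logb 2 (2 * ρ ^ n) = 1 + n * Real.logb 2 ρ := by
      rw [Real.logb_mul two_ne_zero (by positivity), Real.logb_self_eq_one (by norm_num),
        Real.logb_pow]
    have h3 : (Real.logb 2 ρ + (n:ℝ)⁻¹) * n = n * Real.logb 2 ρ + 1 := by
      field_simp
    rw [h3]
    linarith


/-- There is a unique real root `ρ` of `x³ = x + 1`, and `(log₂ N(n))/n` converges to
`log₂ ρ`, the capacity of the RLL({1},{1,2}) constraint. -/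
theorem stmt12 :
    (∃! ρ : ℝ, ρ ^ 3 = ρ + 1) ∧
    ∀ ρ : ℝ, ρ ^ 3 = ρ + 1 →
      Filter.Tendsto (fun n : ℕ => Real.logb 2 (N₀₁₂ n) / n) Filter.atTop
        (nhds (Real.logb 2 ρ)) := by
  exact ⟨root_unique, fun ρ hρ => N_limit ρ hρ⟩
end

section
/- For n ≥ 1 let N(n) be the number of binary strings of length n in which every maximal run of 0s has length 1 and every maximal run of 1s has length 1 or 3. Then (log₂ N(n))/n converges as n → ∞ to (1/2)·log₂((1+√5)/2) (≈ 0.347); equivalently, the limit is log₂ λ where λ > 1 satisfies λ⁴ = λ² + 1. This limit is the capacity of the RLL({1},{1,3}) constraint. -/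
/-- The number of binary strings of length `n` in which every maximal run of `0`s has
length `1` and every maximal run of `1`s has length `1` or `3`, i.e. the strings
satisfying the RLL({1},{1,3}) constraint. -/
noncomputable def N₀₁₃ (n : ℕ) : ℕ :=
  Nat.card {s : Fin n → Bool //
    ∀ i j : Fin n, IsMaxRun s i j →
      ((s i = false → (j : ℕ) - (i : ℕ) + 1 = 1) ∧
       (s i = true → ((j : ℕ) - (i : ℕ) + 1 = 1 ∨ (j : ℕ) - (i : ℕ) + 1 = 3)))}


namespace RLL13

def Adm {n : ℕ} (s : Fin n → Bool) : Prop :=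
  ∀ i j : Fin n, IsMaxRun s i j →
      ((s i = false → (j : ℕ) - (i : ℕ) + 1 = 1) ∧
       (s i = true → ((j : ℕ) - (i : ℕ) + 1 = 1 ∨ (j : ℕ) - (i : ℕ) + 1 = 3)))

def EndsF {n : ℕ} (s : Fin n → Bool) : Prop := ∀ i : Fin n, (i : ℕ) = n - 1 → s i = false
def EndsT {n : ℕ} (s : Fin n → Bool) : Prop := ∀ i : Fin n, (i : ℕ) = n - 1 → s i = true

lemma run_right {n : ℕ} (s : Fin n → Bool) :
    ∀ (m : ℕ) (p : Fin n), n - 1 - (p : ℕ) = m →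
      ∃ j : Fin n, p ≤ j ∧ (∀ k, p ≤ k → k ≤ j → s k = s p) ∧
        ((j : ℕ) = n - 1 ∨ ∃ j' : Fin n, (j : ℕ) + 1 = (j' : ℕ) ∧ s j' ≠ s j) := by
  intro m
  induction m with
  | zero =>
      intro p hp
      refine ⟨p, le_refl _, ?_, Or.inl ?_⟩
      · intro k h1 h2
        have : k = p := le_antisymm h2 h1
        rw [this]
      · have := p.2; omega
  | succ m ih =>
      intro p hp
      have hplt : (p : ℕ) + 1 < n := by have := p.2; omega
      set q : Fin n := ⟨(p : ℕ) + 1, hplt⟩ with hq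
      by_cases hsq : s q = s p
      · obtain ⟨j, h1, h2, h3⟩ := ih q (show n - 1 - ((p:ℕ)+1) = m by omega)
        have h1' : (p : ℕ) + 1 ≤ (j : ℕ) := h1
        refine ⟨j, ?_, ?_, ?_⟩
        · rw [Fin.le_def]; omega
        · intro k hk1 hk2
          rcases Nat.eq_or_lt_of_le (show (p:ℕ) ≤ (k:ℕ) from hk1) with h | h
          · have : k = p := by apply Fin.ext; omega
            rw [this]
          · have hk1' : q ≤ k := show (p:ℕ)+1 ≤ (k:ℕ) by omega
            rw [h2 k hk1' hk2, hsq]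
        · exact h3
      · refine ⟨p, le_refl _, ?_, Or.inr ⟨q, rfl, ?_⟩⟩
        · intro k h1 h2
          have : k = p := le_antisymm h2 h1
          rw [this]
        · exact hsq

lemma run_left {n : ℕ} (s : Fin n → Bool) :
    ∀ (m : ℕ) (p : Fin n), (p : ℕ) = m →
      ∃ i : Fin n, i ≤ p ∧ (∀ k, i ≤ k → k ≤ p → s k = s p) ∧
        ((i : ℕ) = 0 ∨ ∃ i' : Fin n, (i' : ℕ) + 1 = (i : ℕ) ∧ s i' ≠ s i) := by
  intro m
  induction m with
  | zero =>
      intro p hp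
      refine ⟨p, le_refl _, ?_, Or.inl hp⟩
      intro k h1 h2
      have : k = p := le_antisymm h2 h1
      rw [this]
  | succ m ih =>
      intro p hp
      have hplt : (p : ℕ) - 1 < n := by have := p.2; omega
      set q : Fin n := ⟨(p : ℕ) - 1, hplt⟩ with hq
      by_cases hsq : s q = s p
      · obtain ⟨i, h1, h2, h3⟩ := ih q (show ((p:ℕ) - 1) = m by omega)
        have h1' : (i : ℕ) ≤ (p : ℕ) - 1 := h1
        refine ⟨i, ?_, ?_, ?_⟩
        · rw [Fin.le_def]; omega
        · intro k hk1 hk2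
          rcases Nat.eq_or_lt_of_le (show (k:ℕ) ≤ (p:ℕ) from hk2) with h | h
          · have : k = p := by apply Fin.ext; omega
            rw [this]
          · have hk2' : k ≤ q := show (k:ℕ) ≤ (p:ℕ)-1 by omega
            rw [h2 k hk1 hk2', hsq]
        · exact h3
      · refine ⟨p, le_refl _, ?_, Or.inr ⟨q, show ((p:ℕ)-1)+1 = (p:ℕ) by omega, ?_⟩⟩
        · intro k h1 h2
          have : k = p := le_antisymm h2 h1
          rw [this]
        · exact hsq

lemma exists_maxRun {n : ℕ} (s : Fin n → Bool) (p : Fin n) :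
    ∃ i j : Fin n, IsMaxRun s i j ∧ i ≤ p ∧ p ≤ j := by
  obtain ⟨i, hi1, hi2, hi3⟩ := run_left s (p : ℕ) p rfl
  obtain ⟨j, hj1, hj2, hj3⟩ := run_right s (n - 1 - (p : ℕ)) p rfl
  have hip : s i = s p := hi2 i (le_refl _) hi1
  refine ⟨i, j, ⟨le_trans hi1 hj1, ?_, ?_, ?_⟩, hi1, hj1⟩
  · intro k h1 h2
    rw [hip]
    rcases le_or_gt k p with h | h
    · exact hi2 k h1 h
    · exact hj2 k (le_of_lt h) h2
  · rcases hi3 with h | ⟨i', h1, h2⟩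
    · exact Or.inl h
    · exact Or.inr ⟨i', h1, h2⟩
  · rcases hj3 with h | ⟨j', h1, h2⟩
    · exact Or.inl h
    · refine Or.inr ⟨j', h1, ?_⟩
      exact h2

end RLL13

namespace RLL13

/-- a maximal run of the restriction of `s` to a prefix is a maximal run of `s`,
provided `s` changes value at the cut. -/
lemma isMaxRun_of_prefix {n m : ℕ} (h : m ≤ n) (hm : 1 ≤ m) (s : Fin n → Bool)
    (hb : ∀ (hmn : m < n), s ⟨m, hmn⟩ ≠ s ⟨m - 1, by omega⟩)
    (i j : Fin m) (hr : IsMaxRun (fun k => s (Fin.castLE h k)) i j) :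
    IsMaxRun s (Fin.castLE h i) (Fin.castLE h j) := by
  obtain ⟨hij, hconst, hleft, hright⟩ := hr
  refine ⟨hij, ?_, ?_, ?_⟩
  · intro k hk1 hk2
    have hkm : (k : ℕ) < m := lt_of_le_of_lt (show (k:ℕ) ≤ (j:ℕ) from hk2) j.2
    have h2 : s (Fin.castLE h ⟨(k : ℕ), hkm⟩) = s (Fin.castLE h i) :=
      hconst ⟨(k : ℕ), hkm⟩ hk1 hk2
    have hk : Fin.castLE h (⟨(k : ℕ), hkm⟩ : Fin m) = k := by apply Fin.ext; rfl
    rwa [hk] at h2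
  · rcases hleft with h0 | ⟨i', h1, h2⟩
    · exact Or.inl h0
    · exact Or.inr ⟨Fin.castLE h i', h1, h2⟩
  · rcases hright with h0 | ⟨j', h1, h2⟩
    · rcases Nat.lt_or_ge (m : ℕ) n with hmn | hmn
      · refine Or.inr ⟨⟨m, hmn⟩, by show (j:ℕ) + 1 = m; omega, ?_⟩
        have : Fin.castLE h j = (⟨m - 1, by omega⟩ : Fin n) := by apply Fin.ext; show (j:ℕ) = m - 1; omega
        rw [this]
        exact hb hmn
      · have : m = n := le_antisymm h hmn
        exact Or.inl (by show (j:ℕ) = n - 1; omega)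
    · exact Or.inr ⟨Fin.castLE h j', h1, h2⟩

/-- a maximal run of `s` lying inside a prefix is a maximal run of the restriction. -/
lemma isMaxRun_restrict {n m : ℕ} (h : m ≤ n) (s : Fin n → Bool)
    (i j : Fin n) (hj : (j : ℕ) < m) (hr : IsMaxRun s i j) :
    IsMaxRun (fun k => s (Fin.castLE h k))
      ⟨(i : ℕ), lt_of_le_of_lt (Fin.le_def.mp hr.1) hj⟩ ⟨(j : ℕ), hj⟩ := by
  obtain ⟨hij, hconst, hleft, hright⟩ := hr
  have hcast : ∀ (k : Fin n) (hk : (k : ℕ) < m), Fin.castLE h ⟨(k : ℕ), hk⟩ = k := by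
    intro k hk; apply Fin.ext; rfl
  refine ⟨hij, ?_, ?_, ?_⟩
  · intro k hk1 hk2
    simp only []
    rw [hcast i _]
    have := hconst (Fin.castLE h k) hk1 hk2
    exact this
  · rcases hleft with h0 | ⟨i', h1, h2⟩
    · exact Or.inl h0
    · have hi'm : (i' : ℕ) < m := by omega
      refine Or.inr ⟨⟨(i' : ℕ), hi'm⟩, h1, ?_⟩
      simp only []
      rw [hcast i' hi'm, hcast i _]
      exact h2
  · rcases hright with h0 | ⟨j', h1, h2⟩
    · have : m = n := by omega
      exact Or.inl (by show (j:ℕ) = m - 1; omega)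
    · rcases Nat.lt_or_ge (j' : ℕ) m with hj'm | hj'm
      · refine Or.inr ⟨⟨(j' : ℕ), hj'm⟩, h1, ?_⟩
        simp only []
        rw [hcast j' hj'm, hcast j _]
        exact h2
      · refine Or.inl ?_
        show (j:ℕ) = m - 1
        omega

lemma adm_restrict {n m : ℕ} (h : m ≤ n) (hm : 1 ≤ m) {s : Fin n → Bool} (hs : Adm s)
    (hb : ∀ (hmn : m < n), s ⟨m, hmn⟩ ≠ s ⟨m - 1, by omega⟩) :
    Adm (fun k => s (Fin.castLE h k)) := by
  intro i j hr
  exact hs _ _ (isMaxRun_of_prefix h hm s hb i j hr)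

end RLL13

namespace RLL13

lemma tailF_fact {n : ℕ} (hn : 2 ≤ n) {s : Fin n → Bool} (hs : Adm s) (he : EndsF s) :
    s ⟨n - 2, by omega⟩ = true := by
  obtain ⟨i, j, hr, hip, hpj⟩ := exists_maxRun s ⟨n - 1, by omega⟩
  obtain ⟨hij, hconst, hleft, hright⟩ := hr
  have hjv : (j : ℕ) = n - 1 := by
    have := j.2; have := Fin.le_def.mp hpj; simp at this; omega
  have hsi : s i = false := by
    rw [← hconst ⟨n - 1, by omega⟩ hip hpj]
    exact he _ (by simp)
  have hlen := (hs i j ⟨hij, hconst, hleft, hright⟩).1 hsi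
  have hiv : (i : ℕ) = n - 1 := by have := Fin.le_def.mp hij; omega
  rcases hleft with h0 | ⟨i', h1, h2⟩
  · omega
  · have hi' : i' = (⟨n - 2, by omega⟩ : Fin n) := by apply Fin.ext; show (i':ℕ) = n - 2; omega
    rw [← hi']
    rw [hsi] at h2
    simpa using h2

lemma tailT_fact {n : ℕ} (hn : 4 ≤ n) {s : Fin n → Bool} (hs : Adm s) (he : EndsT s) :
    s ⟨n - 2, by omega⟩ = false ∨
      (s ⟨n - 2, by omega⟩ = true ∧ s ⟨n - 3, by omega⟩ = true ∧ s ⟨n - 4, by omega⟩ = false) := by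
  obtain ⟨i, j, hr, hip, hpj⟩ := exists_maxRun s ⟨n - 1, by omega⟩
  obtain ⟨hij, hconst, hleft, hright⟩ := hr
  have hjv : (j : ℕ) = n - 1 := by
    have := j.2; have := Fin.le_def.mp hpj; simp at this; omega
  have hsi : s i = true := by
    rw [← hconst ⟨n - 1, by omega⟩ hip hpj]
    exact he _ (by simp)
  have hlen := (hs i j ⟨hij, hconst, hleft, hright⟩).2 hsi
  have hijv := Fin.le_def.mp hij
  rcases hlen with h1 | h3
  · -- run of length 1 : s (n-2) = false
    have hiv : (i : ℕ) = n - 1 := by omega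
    rcases hleft with h0 | ⟨i', hi1, hi2⟩
    · omega
    · left
      have hi' : i' = (⟨n - 2, by omega⟩ : Fin n) := by
        apply Fin.ext; show (i':ℕ) = n - 2; omega
      rw [← hi']
      rw [hsi] at hi2
      simpa using hi2
  · -- run of length 3
    have hiv : (i : ℕ) = n - 3 := by omega
    right
    refine ⟨?_, ?_, ?_⟩
    · exact (hconst ⟨n - 2, by omega⟩ (by rw [Fin.le_def]; show (i:ℕ) ≤ n - 2; omega)
        (by rw [Fin.le_def]; show n - 2 ≤ (j:ℕ); omega)).trans hsi
    · exact (hconst ⟨n - 3, by omega⟩ (by rw [Fin.le_def]; show (i:ℕ) ≤ n - 3; omega)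
        (by rw [Fin.le_def]; show n - 3 ≤ (j:ℕ); omega)).trans hsi
    · rcases hleft with h0 | ⟨i', hi1, hi2⟩
      · omega
      · have hi' : i' = (⟨n - 4, by omega⟩ : Fin n) := by
          apply Fin.ext; show (i':ℕ) = n - 4; omega
        rw [← hi']
        rw [hsi] at hi2
        simpa using hi2

end RLL13

namespace RLL13

/-- extend a string ending in `false` by a run of `r` trues and one false. -/
def extb (r : ℕ) {n : ℕ} (s : Fin n → Bool) : Fin (n + (r + 1)) → Bool :=
  fun k => if hk : (k : ℕ) < n then s ⟨(k : ℕ), hk⟩ else decide ((k : ℕ) < n + r)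

lemma extb_lt (r : ℕ) {n : ℕ} (s : Fin n → Bool) (k : Fin (n + (r+1))) (hk : (k : ℕ) < n) :
    extb r s k = s ⟨(k : ℕ), hk⟩ := by simp [extb, hk]

lemma extb_ge (r : ℕ) {n : ℕ} (s : Fin n → Bool) (k : Fin (n + (r+1))) (hk : ¬ (k : ℕ) < n) :
    extb r s k = decide ((k : ℕ) < n + r) := by simp [extb, hk]

lemma endsF_extb (r : ℕ) {n : ℕ} (s : Fin n → Bool) : EndsF (extb r s) := by
  intro k hk
  have hk' : (k : ℕ) = n + r := by omega
  rw [extb_ge r s k (by omega)]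
  simp [hk']

lemma adm_extb {n r : ℕ} (hn : 1 ≤ n) (hr : r = 1 ∨ r = 3) {s : Fin n → Bool}
    (hs : Adm s) (he : EndsF s) : Adm (extb r s) := by
  have hrpos : 1 ≤ r := by omega
  intro i j hmr
  obtain ⟨hij, hconst, hleft, hright⟩ := hmr
  have hijv := Fin.le_def.mp hij
  have hjlt := j.2
  have hilt := i.2
  -- value of ext at n-1 and n
  have hvn1 : extb r s ⟨n - 1, by omega⟩ = false := by
    rw [extb_lt r s _ (by show n - 1 < n; omega)]
    exact he _ (by show n - 1 = n - 1; rfl)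
  have hvn : extb r s ⟨n, by omega⟩ = true := by
    rw [extb_ge r s _ (by show ¬ n < n; omega)]
    simp; omega
  rcases Nat.lt_or_ge (j : ℕ) n with hjn | hjn
  · -- run inside the prefix: transfer down to s
    have hres : (fun k : Fin n => extb r s (Fin.castLE (by omega : n ≤ n + (r+1)) k)) = s := by
      funext k
      rw [extb_lt r s _ (by exact k.2)]
      exact congrArg s (Fin.ext rfl)
    have hdown := isMaxRun_restrict (by omega : n ≤ n + (r+1)) (extb r s) i j hjn
      ⟨hij, hconst, hleft, hright⟩
    rw [hres] at hdown
    have := hs _ _ hdown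
    have hvi : s ⟨(i:ℕ), by omega⟩ = extb r s i := by
      rw [extb_lt r s i (by omega)]
    constructor
    · intro hf
      exact (this.1 (by rw [hvi]; exact hf))
    · intro ht
      exact (this.2 (by rw [hvi]; exact ht))
  · rcases Nat.lt_or_ge (i : ℕ) n with hin | hin
    · -- run crossing the boundary: impossible
      exfalso
      have h1 := hconst ⟨n - 1, by omega⟩ (by rw [Fin.le_def]; show (i:ℕ) ≤ n - 1; omega)
        (by rw [Fin.le_def]; show n - 1 ≤ (j:ℕ); omega)
      have h2 := hconst ⟨n, by omega⟩ (by rw [Fin.le_def]; show (i:ℕ) ≤ n; omega)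
        (by rw [Fin.le_def]; show n ≤ (j:ℕ); omega)
      rw [hvn1] at h1
      rw [hvn] at h2
      rw [← h1] at h2
      exact Bool.true_eq_false.mp h2
    · -- run inside the appended block
      rcases Nat.lt_or_ge (i : ℕ) (n + r) with hinr | hinr
      · -- the true-run : i = n, j = n + r - 1
        have hvi : extb r s i = true := by
          rw [extb_ge r s i (by omega)]; simp; omega
        have hiv : (i : ℕ) = n := by
          rcases hleft with h0 | ⟨i', h1, h2⟩
          · omega
          · by_contra hne
            have hi'n : ¬ (i' : ℕ) < n := by omega
            have : extb r s i' = true := by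
              rw [extb_ge r s i' hi'n]; simp; omega
            rw [this, hvi] at h2
            exact h2 rfl
        have hvj : extb r s j = true := by rw [hconst j hij (le_refl _), hvi]
        have hjr : (j : ℕ) < n + r := by
          by_contra hc
          rw [extb_ge r s j (by omega)] at hvj
          simp at hvj; omega
        have hjv : (j : ℕ) = n + r - 1 := by
          rcases hright with h0 | ⟨j', h1, h2⟩
          · omega
          · by_contra hne
            have : extb r s j' = true := by
              rw [extb_ge r s j' (by omega)]; simp; omega
            rw [this, hvj] at h2
            exact h2 rfl
        constructor
        · intro hf; rw [hvi] at hf; exact absurd hf (by simp)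
        · intro _
          rcases hr with h | h <;> [left; right] <;> omega
      · -- the final false : i = j = n + r
        have hiv : (i : ℕ) = n + r := by omega
        have hjv : (j : ℕ) = n + r := by omega
        have hvi : extb r s i = false := by
          rw [extb_ge r s i (by omega)]; simp; omega
        constructor
        · intro _; omega
        · intro ht; rw [hvi] at ht; exact absurd ht (by simp)

end RLL13

namespace RLL13

noncomputable def D (n : ℕ) : ℕ := Nat.card {s : Fin n → Bool // Adm s ∧ EndsF s}
noncomputable def E (n : ℕ) : ℕ := Nat.card {s : Fin n → Bool // Adm s ∧ EndsT s}

lemma N_eq (n : ℕ) : N₀₁₃ n = Nat.card {s : Fin n → Bool // Adm s} := rfl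

/-- the lower recurrence -/
lemma D_rec_lower (n : ℕ) (hn : 1 ≤ n) : D (n + 2) + D n ≤ D (n + 4) := by
  unfold D
  rw [← Nat.card_sum]
  have hkey : Function.Injective
      (fun x : ({s : Fin (n+2) → Bool // Adm s ∧ EndsF s} ⊕ {s : Fin n → Bool // Adm s ∧ EndsF s}) =>
        (match x with
        | Sum.inl ⟨s, h⟩ => ⟨extb 1 s, adm_extb (by omega) (Or.inl rfl) h.1 h.2, endsF_extb 1 s⟩
        | Sum.inr ⟨s, h⟩ => ⟨extb 3 s, adm_extb hn (Or.inr rfl) h.1 h.2, endsF_extb 3 s⟩ :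
          {s : Fin (n+4) → Bool // Adm s ∧ EndsF s})) := by
    intro a b hab
    have hv := congrArg Subtype.val hab
    match a, b with
    | Sum.inl ⟨s, h⟩, Sum.inl ⟨t, h'⟩ =>
        simp only [] at hv
        have hst : s = t := by
          funext k
          have h2 := congrFun hv (⟨(k : ℕ), by omega⟩ : Fin (n+4))
          rw [extb_lt 1 s _ (by exact k.2), extb_lt 1 t _ (by exact k.2)] at h2
          exact h2
        subst hst
        rfl
    | Sum.inr ⟨s, h⟩, Sum.inr ⟨t, h'⟩ =>
        simp only [] at hv
        have hst : s = t := by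
          funext k
          have h2 := congrFun hv (⟨(k : ℕ), by omega⟩ : Fin (n+4))
          rw [extb_lt 3 s _ (by exact k.2), extb_lt 3 t _ (by exact k.2)] at h2
          exact h2
        subst hst
        rfl
    | Sum.inl ⟨s, h⟩, Sum.inr ⟨t, h'⟩ =>
        exfalso
        simp only [] at hv
        have h2 := congrFun hv (⟨n + 1, by omega⟩ : Fin (n+4))
        rw [extb_lt 1 s _ (by show n + 1 < n + 2; omega)] at h2
        rw [extb_ge 3 t _ (by show ¬ n + 1 < n; omega)] at h2
        have hsv : s ⟨n+1, by omega⟩ = false := h.2 _ (by show n + 1 = n + 2 - 1; omega)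
        rw [hsv] at h2
        simp at h2
    | Sum.inr ⟨s, h⟩, Sum.inl ⟨t, h'⟩ =>
        exfalso
        simp only [] at hv
        have h2 := congrFun hv (⟨n + 1, by omega⟩ : Fin (n+4))
        rw [extb_lt 1 t _ (by show n + 1 < n + 2; omega)] at h2
        rw [extb_ge 3 s _ (by show ¬ n + 1 < n; omega)] at h2
        have htv : t ⟨n+1, by omega⟩ = false := h'.2 _ (by show n + 1 = n + 2 - 1; omega)
        rw [htv] at h2
        simp at h2
  exact Nat.card_le_card_of_injective _ hkey

/-- drop the final false -/
lemma D_le_E (n : ℕ) (hn : 2 ≤ n) : D n ≤ E (n - 1) := by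
  unfold D E
  have h1 : n - 1 ≤ n := by omega
  have key : ∀ s : Fin n → Bool, Adm s → EndsF s →
      Adm (fun k : Fin (n-1) => s (Fin.castLE h1 k)) ∧
        EndsT (fun k : Fin (n-1) => s (Fin.castLE h1 k)) := by
    intro s hs he
    have htail := tailF_fact hn hs he
    constructor
    · refine adm_restrict h1 (by omega) hs ?_
      intro hmn
      rw [he ⟨n-1, hmn⟩ rfl]
      have : s ⟨n - 1 - 1, by omega⟩ = true := by
        have : (⟨n - 1 - 1, by omega⟩ : Fin n) = ⟨n - 2, by omega⟩ := by
          apply Fin.ext; show n - 1 - 1 = n - 2; omega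
        rw [this]; exact htail
      rw [this]; simp
    · intro k hk
      have : Fin.castLE h1 k = (⟨n - 2, by omega⟩ : Fin n) := by
        apply Fin.ext; show (k : ℕ) = n - 2; omega
      simp only []
      rw [this]; exact htail
  apply Nat.card_le_card_of_injective
    (f := fun s : {s : Fin n → Bool // Adm s ∧ EndsF s} =>
      (⟨fun k => s.1 (Fin.castLE h1 k), key s.1 s.2.1 s.2.2⟩ :
        {t : Fin (n-1) → Bool // Adm t ∧ EndsT t}))
  intro a b hab
  have hv := congrArg Subtype.val hab
  simp only [] at hv
  apply Subtype.ext
  funext k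
  rcases Nat.lt_or_ge (k : ℕ) (n - 1) with hk | hk
  · have h2 := congrFun hv (⟨(k : ℕ), hk⟩ : Fin (n-1))
    simpa using h2
  · have hkv : (k : ℕ) = n - 1 := by have := k.2; omega
    have ha' : ∀ i : Fin n, (i : ℕ) = n - 1 → a.1 i = false := a.2.2
    have hb' : ∀ i : Fin n, (i : ℕ) = n - 1 → b.1 i = false := b.2.2
    rw [ha' k hkv, hb' k hkv]

/-- drop the final true run (length 1 or 3) -/
lemma E_le (n : ℕ) (hn : 4 ≤ n) : E n ≤ D (n - 1) + D (n - 3) := by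
  unfold D E
  rw [← Nat.card_sum]
  have h1 : n - 1 ≤ n := by omega
  have h3 : n - 3 ≤ n := by omega
  have key1 : ∀ s : Fin n → Bool, Adm s → EndsT s → s ⟨n-2, by omega⟩ = false →
      Adm (fun k : Fin (n-1) => s (Fin.castLE h1 k)) ∧
        EndsF (fun k : Fin (n-1) => s (Fin.castLE h1 k)) := by
    intro s hs he h2
    constructor
    · refine adm_restrict h1 (by omega) hs ?_
      intro hmn
      rw [he ⟨n-1, hmn⟩ rfl]
      have heq : (⟨n - 1 - 1, by omega⟩ : Fin n) = ⟨n - 2, by omega⟩ := by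
        apply Fin.ext; show n - 1 - 1 = n - 2; omega
      rw [heq, h2]; simp
    · intro k hk
      have : Fin.castLE h1 k = (⟨n - 2, by omega⟩ : Fin n) := by
        apply Fin.ext; show (k : ℕ) = n - 2; omega
      simp only []
      rw [this]; exact h2
  have key3 : ∀ s : Fin n → Bool, Adm s → EndsT s →
      s ⟨n-3, by omega⟩ = true → s ⟨n-4, by omega⟩ = false →
      Adm (fun k : Fin (n-3) => s (Fin.castLE h3 k)) ∧
        EndsF (fun k : Fin (n-3) => s (Fin.castLE h3 k)) := by
    intro s hs he ht3 hf4
    constructor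
    · refine adm_restrict h3 (by omega) hs ?_
      intro hmn
      rw [show (⟨n-3, hmn⟩ : Fin n) = ⟨n-3, by omega⟩ from rfl, ht3]
      have heq : (⟨n - 3 - 1, by omega⟩ : Fin n) = ⟨n - 4, by omega⟩ := by
        apply Fin.ext; show n - 3 - 1 = n - 4; omega
      rw [heq, hf4]; simp
    · intro k hk
      have : Fin.castLE h3 k = (⟨n - 4, by omega⟩ : Fin n) := by
        apply Fin.ext; show (k : ℕ) = n - 4; omega
      simp only []
      rw [this]; exact hf4
  have hbranch : ∀ s : Fin n → Bool, Adm s → EndsT s → ¬ s ⟨n-2, by omega⟩ = true →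
      s ⟨n-2, by omega⟩ = false := by
    intro s hs he h; simpa using h
  have hbranch3 : ∀ s : Fin n → Bool, Adm s → EndsT s → s ⟨n-2, by omega⟩ = true →
      s ⟨n-3, by omega⟩ = true ∧ s ⟨n-4, by omega⟩ = false := by
    intro s hs he h2
    rcases tailT_fact hn hs he with hf | ⟨_, h3, h4⟩
    · rw [h2] at hf; exact absurd hf (by simp)
    · exact ⟨h3, h4⟩
  apply Nat.card_le_card_of_injective
    (f := fun s : {s : Fin n → Bool // Adm s ∧ EndsT s} =>
      if h2 : s.1 ⟨n-2, by omega⟩ = true then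
        Sum.inr (⟨fun k : Fin (n-3) => s.1 (Fin.castLE h3 k),
          key3 s.1 s.2.1 s.2.2 (hbranch3 s.1 s.2.1 s.2.2 h2).1 (hbranch3 s.1 s.2.1 s.2.2 h2).2⟩ :
            {t : Fin (n-3) → Bool // Adm t ∧ EndsF t})
      else
        Sum.inl (⟨fun k : Fin (n-1) => s.1 (Fin.castLE h1 k),
          key1 s.1 s.2.1 s.2.2 (hbranch s.1 s.2.1 s.2.2 h2)⟩ :
            {t : Fin (n-1) → Bool // Adm t ∧ EndsF t}))
  intro a b hab
  by_cases ha : a.1 ⟨n-2, by omega⟩ = true <;> by_cases hb : b.1 ⟨n-2, by omega⟩ = true <;>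
    simp only [ha, hb, dif_pos, dif_neg, not_true, not_false_iff] at hab
  · -- both length-3 branch
    have hv := congrArg Subtype.val (Sum.inr_injective hab)
    simp only [] at hv
    apply Subtype.ext
    funext k
    rcases Nat.lt_or_ge (k : ℕ) (n - 3) with hk | hk
    · have h2 := congrFun hv (⟨(k : ℕ), hk⟩ : Fin (n-3))
      simpa using h2
    · have hk3 : (k : ℕ) = n - 3 ∨ (k : ℕ) = n - 2 ∨ (k : ℕ) = n - 1 := by
        have := k.2; omega
      rcases hk3 with h | h | h
      · have e1 : k = (⟨n-3, by omega⟩ : Fin n) := by apply Fin.ext; exact h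
        rw [e1, (hbranch3 a.1 a.2.1 a.2.2 ha).1, (hbranch3 b.1 b.2.1 b.2.2 hb).1]
      · have e1 : k = (⟨n-2, by omega⟩ : Fin n) := by apply Fin.ext; exact h
        rw [e1, ha, hb]
      · rw [a.2.2 k h, b.2.2 k h]
  · simp at hab
  · simp at hab
  · -- both length-1 branch
    have hv := congrArg Subtype.val (Sum.inl_injective hab)
    simp only [] at hv
    apply Subtype.ext
    funext k
    rcases Nat.lt_or_ge (k : ℕ) (n - 1) with hk | hk
    · have h2 := congrFun hv (⟨(k : ℕ), hk⟩ : Fin (n-1))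
      simpa using h2
    · have hkv : (k : ℕ) = n - 1 := by have := k.2; omega
      rw [a.2.2 k hkv, b.2.2 k hkv]

lemma N_le_DE (n : ℕ) (hn : 1 ≤ n) : N₀₁₃ n ≤ D n + E n := by
  rw [N_eq]
  unfold D E
  rw [← Nat.card_sum]
  apply Nat.card_le_card_of_injective
    (f := fun s : {s : Fin n → Bool // Adm s} =>
      if hf : s.1 ⟨n-1, by omega⟩ = false then
        Sum.inl (⟨s.1, s.2, fun i hi => by
          rw [show i = (⟨n-1, by omega⟩ : Fin n) from Fin.ext hi]; exact hf⟩ :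
            {t : Fin n → Bool // Adm t ∧ EndsF t})
      else
        Sum.inr (⟨s.1, s.2, fun i hi => by
          rw [show i = (⟨n-1, by omega⟩ : Fin n) from Fin.ext hi]; simpa using hf⟩ :
            {t : Fin n → Bool // Adm t ∧ EndsT t}))
  intro a b hab
  simp only [] at hab
  by_cases ha : a.1 ⟨n-1, by omega⟩ = false <;> by_cases hb : b.1 ⟨n-1, by omega⟩ = false
  · rw [dif_pos ha, dif_pos hb] at hab
    have h' := Sum.inl_injective hab
    rw [Subtype.mk.injEq] at h'
    exact Subtype.ext h'
  · rw [dif_pos ha, dif_neg hb] at hab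
    simp at hab
  · rw [dif_neg ha, dif_pos hb] at hab
    simp at hab
  · rw [dif_neg ha, dif_neg hb] at hab
    have h' := Sum.inr_injective hab
    rw [Subtype.mk.injEq] at h'
    exact Subtype.ext h'

lemma D_le_N (n : ℕ) : D n ≤ N₀₁₃ n := by
  rw [N_eq]; unfold D
  exact Nat.card_le_card_of_injective
    (fun s : {s : Fin n → Bool // Adm s ∧ EndsF s} => (⟨s.1, s.2.1⟩ : {s : Fin n → Bool // Adm s}))
    (fun a b hab => Subtype.ext (congrArg Subtype.val hab : _))

lemma D_le_pow (n : ℕ) : D n ≤ 2 ^ n := by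
  unfold D
  have := Nat.card_le_card_of_injective
    (Subtype.val : {s : Fin n → Bool // Adm s ∧ EndsF s} → (Fin n → Bool))
    Subtype.val_injective
  simpa [Nat.card_eq_fintype_card] using this

end RLL13

namespace RLL13

instance {n : ℕ} (s : Fin n → Bool) (i j : Fin n) : Decidable (IsMaxRun s i j) := by
  unfold IsMaxRun; infer_instance

instance {n : ℕ} (s : Fin n → Bool) : Decidable (Adm s) := by
  unfold Adm; infer_instance

instance {n : ℕ} (s : Fin n → Bool) : Decidable (EndsF s) := by
  unfold EndsF; infer_instance

lemma D_pos_one : 1 ≤ D 1 := by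
  have : Nonempty {s : Fin 1 → Bool // Adm s ∧ EndsF s} := ⟨⟨![false], by decide⟩⟩
  unfold D; exact Nat.card_pos

lemma D_pos_two : 1 ≤ D 2 := by
  have : Nonempty {s : Fin 2 → Bool // Adm s ∧ EndsF s} := ⟨⟨![true, false], by decide⟩⟩
  unfold D; exact Nat.card_pos

lemma D_pos_three : 1 ≤ D 3 := by
  have : Nonempty {s : Fin 3 → Bool // Adm s ∧ EndsF s} := ⟨⟨![false, true, false], by decide⟩⟩
  unfold D; exact Nat.card_pos

lemma D_pos_four : 1 ≤ D 4 := by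
  have : Nonempty {s : Fin 4 → Bool // Adm s ∧ EndsF s} :=
    ⟨⟨![true, true, true, false], by decide⟩⟩
  unfold D; exact Nat.card_pos

end RLL13

namespace RLL13

noncomputable def mu : ℝ := Real.sqrt ((1 + Real.sqrt 5) / 2)

lemma sqrt5_sq : Real.sqrt 5 ^ 2 = 5 := Real.sq_sqrt (by norm_num)

lemma sqrt5_lt : Real.sqrt 5 < 3 := by
  nlinarith [sqrt5_sq, Real.sqrt_nonneg 5]

lemma sqrt5_gt : 1 < Real.sqrt 5 := by
  nlinarith [sqrt5_sq, Real.sqrt_nonneg 5]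

lemma phi_pos : (0:ℝ) < (1 + Real.sqrt 5) / 2 := by
  nlinarith [Real.sqrt_nonneg 5]

lemma mu_sq : mu ^ 2 = (1 + Real.sqrt 5) / 2 :=
  Real.sq_sqrt (le_of_lt phi_pos)

lemma mu_gt1 : 1 < mu := by
  have h1 : (1:ℝ) < (1 + Real.sqrt 5) / 2 := by nlinarith [sqrt5_gt]
  have h2 := mu_sq
  have h3 : 0 ≤ mu := Real.sqrt_nonneg _
  nlinarith

lemma mu_sq_le : mu ^ 2 ≤ 2 := by
  rw [mu_sq]; nlinarith [sqrt5_lt]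

lemma mu_pow4 : mu ^ 4 = mu ^ 2 + 1 := by
  have h : mu ^ 4 = (mu ^ 2) ^ 2 := by ring
  rw [h, mu_sq]
  nlinarith [sqrt5_sq]

lemma one_le_mu_pow (n : ℕ) : (1:ℝ) ≤ mu ^ n := one_le_pow₀ (le_of_lt mu_gt1)

lemma mu_pow_pos (n : ℕ) : (0:ℝ) < mu ^ n := lt_of_lt_of_le one_pos (one_le_mu_pow n)

lemma D_upper : ∀ n : ℕ, (D n : ℝ) ≤ 16 * mu ^ n := by
  intro n
  induction n using Nat.strong_induction_on with
  | _ n ih =>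
    rcases Nat.lt_or_ge n 5 with hn5 | hn5
    · have hD : D n ≤ 16 := by
        have := D_le_pow n
        have h2 : 2 ^ n ≤ 16 := by
          calc 2 ^ n ≤ 2 ^ 4 := Nat.pow_le_pow_right (by norm_num) (by omega)
          _ = 16 := by norm_num
        omega
      have hc : (D n : ℝ) ≤ 16 := by exact_mod_cast hD
      nlinarith [one_le_mu_pow n]
    · have hrec : D n ≤ D (n-2) + D (n-4) := by
        have t1 := D_le_E n (by omega)
        have t2 := E_le (n-1) (by omega)
        have e1 : n - 1 - 1 = n - 2 := by omega
        have e2 : n - 1 - 3 = n - 4 := by omega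
        rw [e1, e2] at t2
        omega
      have ih2 := ih (n-2) (by omega)
      have ih4 := ih (n-4) (by omega)
      have hcast : (D n : ℝ) ≤ (D (n-2) : ℝ) + (D (n-4) : ℝ) := by exact_mod_cast hrec
      have h24 : mu ^ (n-2) = mu ^ (n-4) * mu ^ 2 := by rw [← pow_add]; congr 1; omega
      have hn4 : mu ^ n = mu ^ (n-4) * mu ^ 4 := by rw [← pow_add]; congr 1; omega
      have hexp : 16 * mu ^ (n-2) + 16 * mu ^ (n-4) = 16 * mu ^ n := by
        rw [h24, hn4, mu_pow4]; ring
      linarith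

lemma D_lower : ∀ n : ℕ, 1 ≤ n → (1/4 : ℝ) * mu ^ n ≤ (D n : ℝ) := by
  intro n
  induction n using Nat.strong_induction_on with
  | _ n ih =>
    intro hn1
    rcases Nat.lt_or_ge n 5 with hn5 | hn5
    · have hD : 1 ≤ D n := by
        interval_cases n
        · exact D_pos_one
        · exact D_pos_two
        · exact D_pos_three
        · exact D_pos_four
      have hc : (1:ℝ) ≤ (D n : ℝ) := by exact_mod_cast hD
      have hmn : mu ^ n ≤ mu ^ 4 :=
        pow_le_pow_right₀ (le_of_lt mu_gt1) (by omega)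
      have h4 : mu ^ 4 ≤ 3 := by
        rw [mu_pow4]; linarith [mu_sq_le]
      linarith
    · have hrec : D (n-2) + D (n-4) ≤ D n := by
        have := D_rec_lower (n-4) (by omega)
        rw [show n - 4 + 2 = n - 2 by omega, show n - 4 + 4 = n by omega] at this
        omega
      have ih2 := ih (n-2) (by omega) (by omega)
      have ih4 := ih (n-4) (by omega) (by omega)
      have hcast : (D (n-2) : ℝ) + (D (n-4) : ℝ) ≤ (D n : ℝ) := by exact_mod_cast hrec
      have h24 : mu ^ (n-2) = mu ^ (n-4) * mu ^ 2 := by rw [← pow_add]; congr 1; omega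
      have hn4 : mu ^ n = mu ^ (n-4) * mu ^ 4 := by rw [← pow_add]; congr 1; omega
      have hexp : (1/4:ℝ) * mu ^ (n-2) + (1/4:ℝ) * mu ^ (n-4) = (1/4:ℝ) * mu ^ n := by
        rw [h24, hn4, mu_pow4]; ring
      linarith

lemma N_lower (n : ℕ) (hn : 1 ≤ n) : (1/4 : ℝ) * mu ^ n ≤ (N₀₁₃ n : ℝ) := by
  have h1 := D_lower n hn
  have h2 : (D n : ℝ) ≤ (N₀₁₃ n : ℝ) := by exact_mod_cast D_le_N n
  linarith

lemma N_upper (n : ℕ) (hn : 4 ≤ n) : (N₀₁₃ n : ℝ) ≤ 48 * mu ^ n := by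
  have h0 : N₀₁₃ n ≤ D n + (D (n-1) + D (n-3)) :=
    le_trans (N_le_DE n (by omega)) (by have := E_le n hn; omega)
  have hc : (N₀₁₃ n : ℝ) ≤ (D n : ℝ) + ((D (n-1) : ℝ) + (D (n-3) : ℝ)) := by exact_mod_cast h0
  have u0 := D_upper n
  have u1 := D_upper (n-1)
  have u3 := D_upper (n-3)
  have p1 : mu ^ (n-1) ≤ mu ^ n := pow_le_pow_right₀ (le_of_lt mu_gt1) (by omega)
  have p3 : mu ^ (n-3) ≤ mu ^ n := pow_le_pow_right₀ (le_of_lt mu_gt1) (by omega)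
  linarith

end RLL13

namespace RLL13

lemma logb_mu : Real.logb 2 mu = (1/2) * Real.logb 2 ((1 + Real.sqrt 5) / 2) := by
  unfold mu Real.logb
  rw [Real.log_sqrt (le_of_lt phi_pos)]
  ring

lemma tendsto_main :
    Filter.Tendsto (fun n : ℕ => Real.logb 2 (N₀₁₃ n) / n) Filter.atTop
      (nhds (Real.logb 2 mu)) := by
  apply tendsto_of_tendsto_of_tendsto_of_le_of_le'
      (g := fun n : ℕ => Real.logb 2 (1/4) / n + Real.logb 2 mu)
      (h := fun n : ℕ => Real.logb 2 48 / n + Real.logb 2 mu)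
  · simpa using (tendsto_const_div_atTop_nhds_zero_nat (Real.logb 2 (1/4))).add
      (tendsto_const_nhds (α := ℕ) (x := Real.logb 2 mu) (f := Filter.atTop))
  · simpa using (tendsto_const_div_atTop_nhds_zero_nat (Real.logb 2 48)).add
      (tendsto_const_nhds (α := ℕ) (x := Real.logb 2 mu) (f := Filter.atTop))
  · refine Filter.eventually_atTop.mpr ⟨4, ?_⟩
    intro n hn
    have hnpos : (0:ℝ) < (n:ℝ) := by
      have : (4:ℝ) ≤ (n:ℝ) := by exact_mod_cast hn
      linarith
    have hlow := N_lower n (by omega)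
    have hqpos : (0:ℝ) < (1/4 : ℝ) * mu ^ n := by
      have := mu_pow_pos n; linarith
    have hNpos : (0:ℝ) < (N₀₁₃ n : ℝ) := lt_of_lt_of_le hqpos hlow
    have hmono : Real.logb 2 ((1/4 : ℝ) * mu ^ n) ≤ Real.logb 2 (N₀₁₃ n) :=
      (Real.logb_le_logb (by norm_num) hqpos hNpos).mpr hlow
    have hsplit : Real.logb 2 ((1/4 : ℝ) * mu ^ n) =
        Real.logb 2 (1/4) + n * Real.logb 2 mu := by
      rw [Real.logb_mul (by norm_num) (ne_of_gt (mu_pow_pos n)), Real.logb_pow]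
    have hdiv : (Real.logb 2 (1/4) + n * Real.logb 2 mu) / n ≤ Real.logb 2 (N₀₁₃ n) / n := by
      apply (div_le_div_iff_of_pos_right hnpos).mpr
      rw [← hsplit]; exact hmono
    have heq : (Real.logb 2 (1/4) + n * Real.logb 2 mu) / n =
        Real.logb 2 (1/4) / n + Real.logb 2 mu := by
      rw [add_div, mul_div_cancel_left₀ _ (ne_of_gt hnpos)]
    rw [heq] at hdiv
    exact hdiv
  · refine Filter.eventually_atTop.mpr ⟨4, ?_⟩
    intro n hn
    have hnpos : (0:ℝ) < (n:ℝ) := by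
      have : (4:ℝ) ≤ (n:ℝ) := by exact_mod_cast hn
      linarith
    have hup := N_upper n hn
    have hlow := N_lower n (by omega)
    have hqpos : (0:ℝ) < (1/4 : ℝ) * mu ^ n := by
      have := mu_pow_pos n; linarith
    have hNpos : (0:ℝ) < (N₀₁₃ n : ℝ) := lt_of_lt_of_le hqpos hlow
    have h48pos : (0:ℝ) < (48:ℝ) * mu ^ n := by
      have := mu_pow_pos n; linarith
    have hmono : Real.logb 2 (N₀₁₃ n) ≤ Real.logb 2 ((48:ℝ) * mu ^ n) :=
      (Real.logb_le_logb (by norm_num) hNpos h48pos).mpr hup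
    have hsplit : Real.logb 2 ((48:ℝ) * mu ^ n) =
        Real.logb 2 48 + n * Real.logb 2 mu := by
      rw [Real.logb_mul (by norm_num) (ne_of_gt (mu_pow_pos n)), Real.logb_pow]
    have hdiv : Real.logb 2 (N₀₁₃ n) / n ≤ (Real.logb 2 48 + n * Real.logb 2 mu) / n := by
      apply (div_le_div_iff_of_pos_right hnpos).mpr
      rw [← hsplit]; exact hmono
    have heq : (Real.logb 2 48 + n * Real.logb 2 mu) / n =
        Real.logb 2 48 / n + Real.logb 2 mu := by
      rw [add_div, mul_div_cancel_left₀ _ (ne_of_gt hnpos)]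
    rw [heq] at hdiv
    exact hdiv

end RLL13

/-- `(log₂ N(n))/n` converges to `(1/2)·log₂((1+√5)/2)`, the capacity of the
RLL({1},{1,3}) constraint; equivalently the limit is `log₂ λ` for the `λ > 1` with
`λ⁴ = λ² + 1`. -/
theorem stmt13 :
    Filter.Tendsto (fun n : ℕ => Real.logb 2 (N₀₁₃ n) / n) Filter.atTop
      (nhds ((1 / 2) * Real.logb 2 ((1 + Real.sqrt 5) / 2))) ∧
    ∀ lam : ℝ, 1 < lam → lam ^ 4 = lam ^ 2 + 1 →
      Real.logb 2 lam = (1 / 2) * Real.logb 2 ((1 + Real.sqrt 5) / 2) := by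
  constructor
  · have h := RLL13.tendsto_main
    rwa [RLL13.logb_mu] at h
  · intro lam hlam hlam4
    have h5 := RLL13.sqrt5_sq
    have hphi : ((1 + Real.sqrt 5)/2)^2 = (1 + Real.sqrt 5)/2 + 1 := by
      linear_combination h5 / 4
    have hfact : (lam^2 - (1 + Real.sqrt 5)/2) * (lam^2 + (1 + Real.sqrt 5)/2 - 1) = 0 := by
      linear_combination hlam4 - hphi
    have hpos2 : 0 < lam^2 + (1 + Real.sqrt 5)/2 - 1 := by
      nlinarith [RLL13.sqrt5_gt]
    have hlam2 : lam^2 = (1 + Real.sqrt 5)/2 := by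
      rcases mul_eq_zero.mp hfact with h | h
      · linarith
      · linarith
    have hlogb : Real.logb 2 (lam^2) = 2 * Real.logb 2 lam := by
      rw [Real.logb_pow]; norm_num
    rw [hlam2] at hlogb
    linarith
end

section
/- With p(L) = Q(1/(2Lε)), the ratio p(2)²/p(1) = Q(1/(4ε))² / Q(1/(2ε)) tends to +∞ as ε → 0⁺. In particular, for all sufficiently small ε > 0 one has p(2)² > p(1); i.e., a scheme whose frame error rate behaves like p(2)² is asymptotically worse than one behaving like p(1). -/
open Real MeasureTheory Set Filter

lemma gauss_integrable :
    Integrable (fun y : ℝ => (Real.sqrt (2 * Real.pi))⁻¹ * Real.exp (-(y ^ 2) / 2)) := by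
  have h : Integrable (fun y : ℝ => Real.exp (-(1/2 : ℝ) * y ^ 2)) :=
    integrable_exp_neg_mul_sq (by norm_num)
  have : (fun y : ℝ => (Real.sqrt (2 * Real.pi))⁻¹ * Real.exp (-(y ^ 2) / 2)) =
      fun y : ℝ => (Real.sqrt (2 * Real.pi))⁻¹ * Real.exp (-(1/2 : ℝ) * y ^ 2) := by
    funext y; ring_nf
  rw [this]
  exact h.const_mul _

lemma gaussQ_lower {x : ℝ} (hx : 0 ≤ x) :
    (Real.sqrt (2 * Real.pi))⁻¹ * Real.exp (-((x+1) ^ 2) / 2) ≤ gaussQ x := by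
  have hc : (0 : ℝ) < (Real.sqrt (2 * Real.pi))⁻¹ := by
    positivity
  have h1 : (Real.sqrt (2 * Real.pi))⁻¹ * Real.exp (-((x+1) ^ 2) / 2)
      ≤ ∫ y in Set.Ioc x (x+1), (Real.sqrt (2 * Real.pi))⁻¹ * Real.exp (-(y ^ 2) / 2) := by
    have h2 : ∫ _y in Set.Ioc x (x+1),
        ((Real.sqrt (2 * Real.pi))⁻¹ * Real.exp (-((x+1) ^ 2) / 2)) =
        (Real.sqrt (2 * Real.pi))⁻¹ * Real.exp (-((x+1) ^ 2) / 2) := by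
      rw [setIntegral_const, Real.volume_real_Ioc]
      simp
    rw [← h2]
    apply setIntegral_mono_on
    · exact integrableOn_const (by rw [Real.volume_Ioc]; exact ENNReal.ofReal_ne_top)
    · exact gauss_integrable.integrableOn
    · exact measurableSet_Ioc
    · intro y hy
      apply mul_le_mul_of_nonneg_left _ hc.le
      apply Real.exp_le_exp.2
      have hy1 : x < y := hy.1
      have hy2 : y ≤ x + 1 := hy.2
      have : y ^ 2 ≤ (x+1) ^ 2 := by nlinarith
      linarith
  refine h1.trans ?_
  apply setIntegral_mono_set gauss_integrable.integrableOn
  · filter_upwards with y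
    positivity
  · exact HasSubset.Subset.eventuallyLE (Set.Ioc_subset_Ioi_self)

lemma gaussQ_pos {x : ℝ} (hx : 0 ≤ x) : 0 < gaussQ x :=
  lt_of_lt_of_le (by positivity) (gaussQ_lower hx)

lemma integral_mul_exp : ∀ x : ℝ,
    ∫ y in Set.Ioi x, y * Real.exp (-(y ^ 2) / 2) = Real.exp (-(x ^ 2) / 2) := by
  intro x
  have h := integral_Ioi_of_hasDerivAt_of_tendsto
    (f := fun y : ℝ => -Real.exp (-(y ^ 2) / 2))
    (f' := fun y : ℝ => y * Real.exp (-(y ^ 2) / 2)) (a := x) (m := 0)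
    ?_ ?_ ?_ ?_
  · rw [h]; simp
  · exact (Continuous.continuousWithinAt (by continuity))
  · intro y _
    have : HasDerivAt (fun y : ℝ => -(y ^ 2) / 2) (-y) y := by
      have := ((hasDerivAt_pow 2 y).neg).div_const 2
      simpa using this.congr_deriv (by push_cast; ring)
    have h2 := (this.exp).neg
    convert h2 using 1
    · ext z; simp
    · ring
  · have h : Integrable (fun y : ℝ => y * Real.exp (-(1/2 : ℝ) * y ^ 2)) :=
      integrable_mul_exp_neg_mul_sq (by norm_num)
    have he : (fun y : ℝ => y * Real.exp (-(y ^ 2) / 2)) =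
        fun y : ℝ => y * Real.exp (-(1/2 : ℝ) * y ^ 2) := by funext y; ring_nf
    rw [he]; exact h.integrableOn
  · have h1 : Filter.Tendsto (fun y : ℝ => -(y ^ 2) / 2) Filter.atTop Filter.atBot := by
      apply Filter.Tendsto.atBot_div_const (by norm_num : (0:ℝ) < 2)
      exact (Filter.tendsto_neg_atTop_atBot).comp (tendsto_pow_atTop two_ne_zero)
    have h2 : Filter.Tendsto (fun y : ℝ => Real.exp (-(y ^ 2) / 2)) Filter.atTop (nhds 0) :=
      Real.tendsto_exp_atBot.comp h1
    simpa using h2.neg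

lemma gaussQ_upper {x : ℝ} (hx : 0 < x) :
    gaussQ x ≤ (Real.sqrt (2 * Real.pi))⁻¹ / x * Real.exp (-(x ^ 2) / 2) := by
  have hc : (0 : ℝ) < (Real.sqrt (2 * Real.pi))⁻¹ := by positivity
  have hint : IntegrableOn (fun y : ℝ =>
      (Real.sqrt (2 * Real.pi))⁻¹ / x * (y * Real.exp (-(y ^ 2) / 2))) (Set.Ioi x) := by
    have h : Integrable (fun y : ℝ => y * Real.exp (-(1/2 : ℝ) * y ^ 2)) :=
      integrable_mul_exp_neg_mul_sq (by norm_num)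
    have he : (fun y : ℝ => (Real.sqrt (2 * Real.pi))⁻¹ / x * (y * Real.exp (-(y ^ 2) / 2))) =
        fun y : ℝ => (Real.sqrt (2 * Real.pi))⁻¹ / x * (y * Real.exp (-(1/2 : ℝ) * y ^ 2)) := by
      funext y; ring_nf
    rw [he]
    exact (h.const_mul _).integrableOn
  have h1 : gaussQ x ≤ ∫ y in Set.Ioi x,
      (Real.sqrt (2 * Real.pi))⁻¹ / x * (y * Real.exp (-(y ^ 2) / 2)) := by
    apply setIntegral_mono_on gauss_integrable.integrableOn hint measurableSet_Ioi
    intro y hy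
    have hxy : x < y := hy
    have h2 : (1 : ℝ) ≤ y / x := (one_le_div hx).2 hxy.le
    have h3 : Real.exp (-(y ^ 2) / 2) ≤ y / x * Real.exp (-(y ^ 2) / 2) :=
      le_mul_of_one_le_left (Real.exp_pos _).le h2
    calc (Real.sqrt (2 * Real.pi))⁻¹ * Real.exp (-(y ^ 2) / 2)
        ≤ (Real.sqrt (2 * Real.pi))⁻¹ * (y / x * Real.exp (-(y ^ 2) / 2)) :=
          mul_le_mul_of_nonneg_left h3 hc.le
      _ = (Real.sqrt (2 * Real.pi))⁻¹ / x * (y * Real.exp (-(y ^ 2) / 2)) := by ring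
  refine h1.trans_eq ?_
  rw [MeasureTheory.integral_const_mul, integral_mul_exp]

lemma ratio_lower {x : ℝ} (hx : 0 < x) :
    2 * x * (Real.sqrt (2 * Real.pi))⁻¹ * Real.exp (2 * x ^ 2 - (x + 1) ^ 2)
      ≤ gaussQ x ^ 2 / gaussQ (2 * x) := by
  set c : ℝ := (Real.sqrt (2 * Real.pi))⁻¹ with hcdef
  have hc : (0 : ℝ) < c := by rw [hcdef]; positivity
  have ha : c * Real.exp (-((x + 1) ^ 2) / 2) ≤ gaussQ x := gaussQ_lower hx.le
  have ha2 : (c * Real.exp (-((x + 1) ^ 2) / 2)) ^ 2 ≤ gaussQ x ^ 2 :=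
    pow_le_pow_left₀ (by positivity) ha 2
  have hb : gaussQ (2 * x) ≤ c / (2 * x) * Real.exp (-((2 * x) ^ 2) / 2) :=
    gaussQ_upper (by positivity)
  have hbpos : 0 < gaussQ (2 * x) := gaussQ_pos (by positivity)
  have hdiv : (c * Real.exp (-((x + 1) ^ 2) / 2)) ^ 2 /
      (c / (2 * x) * Real.exp (-((2 * x) ^ 2) / 2)) ≤ gaussQ x ^ 2 / gaussQ (2 * x) :=
    div_le_div₀ (sq_nonneg _) ha2 hbpos hb
  refine le_trans (le_of_eq ?_) hdiv
  rw [eq_div_iff (by positivity)]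
  rw [show (c * Real.exp (-((x + 1) ^ 2) / 2)) ^ 2
      = c ^ 2 * Real.exp (-((x + 1) ^ 2) / 2 + -((x + 1) ^ 2) / 2) by
    rw [Real.exp_add]; ring]
  rw [show (2 * x * c * Real.exp (2 * x ^ 2 - (x + 1) ^ 2)) *
      (c / (2 * x) * Real.exp (-((2 * x) ^ 2) / 2))
      = c ^ 2 * (2 * x / (2 * x)) *
        Real.exp (2 * x ^ 2 - (x + 1) ^ 2 + -((2 * x) ^ 2) / 2) by
    rw [Real.exp_add]; ring]
  rw [div_self (by positivity : (2 : ℝ) * x ≠ 0)]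
  ring_nf

lemma ratio_tendsto :
    Filter.Tendsto (fun x : ℝ => gaussQ x ^ 2 / gaussQ (2 * x)) Filter.atTop Filter.atTop := by
  set c : ℝ := (Real.sqrt (2 * Real.pi))⁻¹ with hcdef
  have hc : (0 : ℝ) < c := by rw [hcdef]; positivity
  have hL : Filter.Tendsto (fun x : ℝ => 2 * x * c * Real.exp (2 * x ^ 2 - (x + 1) ^ 2))
      Filter.atTop Filter.atTop := by
    apply Filter.Tendsto.atTop_mul_atTop₀
    · have hid : Filter.Tendsto (fun x : ℝ => x) Filter.atTop Filter.atTop :=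
        Filter.tendsto_id
      exact Filter.Tendsto.atTop_mul_const hc
        (hid.const_mul_atTop (by norm_num : (0:ℝ) < 2))
    · apply Real.tendsto_exp_atTop.comp
      apply Filter.tendsto_atTop_mono' _ _ (Filter.tendsto_id (α := ℝ))
      filter_upwards [Filter.eventually_ge_atTop (4 : ℝ)] with x hx
      simp only [id]
      nlinarith
  apply Filter.tendsto_atTop_mono' _ _ hL
  filter_upwards [Filter.eventually_gt_atTop (0 : ℝ)] with x hx
  exact ratio_lower hx

/-- With `p(L) = Q(1/(2Lε))`, the ratio `p(2)²/p(1) = Q(1/(4ε))²/Q(1/(2ε))` tends to `+∞` as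
`ε → 0⁺`; in particular `p(2)² > p(1)` for all sufficiently small `ε > 0`. -/
theorem stmt15 :
    Filter.Tendsto (fun ε : ℝ => gaussQ (1 / (4 * ε)) ^ 2 / gaussQ (1 / (2 * ε)))
      (nhdsWithin 0 (Set.Ioi 0)) Filter.atTop ∧
    ∃ ε₀ > (0 : ℝ), ∀ ε : ℝ, 0 < ε → ε < ε₀ →
      gaussQ (1 / (2 * ε)) < gaussQ (1 / (4 * ε)) ^ 2 := by
  have hcomp : Filter.Tendsto (fun ε : ℝ => 1 / (4 * ε)) (nhdsWithin 0 (Set.Ioi 0))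
      Filter.atTop := by
    have h4 : Filter.Tendsto (fun ε : ℝ => 4 * ε) (nhdsWithin 0 (Set.Ioi 0))
        (nhdsWithin 0 (Set.Ioi 0)) := by
      apply tendsto_nhdsWithin_of_tendsto_nhds_of_eventually_within
      · have : Filter.Tendsto (fun ε : ℝ => 4 * ε) (nhds 0) (nhds (4 * 0)) :=
          (continuous_const.mul continuous_id).tendsto 0
        simpa using this.mono_left nhdsWithin_le_nhds
      · filter_upwards [self_mem_nhdsWithin] with ε (hε : 0 < ε)
        exact mul_pos (by norm_num) hε
    have h5 := tendsto_inv_nhdsGT_zero.comp h4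
    refine h5.congr fun ε => ?_
    simp [Function.comp, one_div]
  have heq : (fun ε : ℝ => gaussQ (1 / (4 * ε)) ^ 2 / gaussQ (1 / (2 * ε)))
      = (fun x : ℝ => gaussQ x ^ 2 / gaussQ (2 * x)) ∘ (fun ε : ℝ => 1 / (4 * ε)) := by
    funext ε
    simp only [Function.comp]
    congr 2
    rcases eq_or_ne ε 0 with h | h
    · simp [h]
    · field_simp
      ring
  have hmain : Filter.Tendsto (fun ε : ℝ => gaussQ (1 / (4 * ε)) ^ 2 / gaussQ (1 / (2 * ε)))
      (nhdsWithin 0 (Set.Ioi 0)) Filter.atTop := by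
    rw [heq]
    exact ratio_tendsto.comp hcomp
  refine ⟨hmain, ?_⟩
  have hev : ∀ᶠ ε in nhdsWithin (0:ℝ) (Set.Ioi 0),
      1 < gaussQ (1 / (4 * ε)) ^ 2 / gaussQ (1 / (2 * ε)) :=
    hmain.eventually_gt_atTop 1
  rw [eventually_nhdsWithin_iff, Metric.eventually_nhds_iff] at hev
  obtain ⟨δ, hδ, h⟩ := hev
  refine ⟨δ, hδ, fun ε hε hεδ => ?_⟩
  have hd : dist ε (0:ℝ) < δ := by
    rw [Real.dist_eq, sub_zero, abs_of_pos hε]; exact hεδ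
  have h1 := h hd hε
  have hpos : 0 < gaussQ (1 / (2 * ε)) := gaussQ_pos (by positivity)
  exact (one_lt_div hpos).1 h1
end
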